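/- arXiv:1407.5236 — 7 statements merged into one kernel-verified Lean document; each statement's English description precedes it below -/
import Mathlib

section
/- For all integers s ≥ 0 and t ≥ 1, there exists a finite simple graph G such that K_{t+1} is not a minor of G, and there is no partition of V(G) into t − 1 sets X_1, …, X_{t−1} with the property that for each i with 1 ≤ i ≤ t − 1 the subgraph of G induced on X_i has maximum degree at most s. -/
/-- `G` has a `K_n` minor: there are `n` nonempty, pairwise disjoint branch sets,
each inducing a connected subgraph, with an edge of `G` between any two of them. -/
def HasCompleteMinor {V : Type} (G : SimpleGraph V) (n : ℕ) : Prop :=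
  ∃ f : Fin n → Set V,
    (∀ i, (f i).Nonempty) ∧
    (∀ i, (G.induce (f i)).Connected) ∧
    (Pairwise fun i j => Disjoint (f i) (f j)) ∧
    (∀ i j, i ≠ j → ∃ x ∈ f i, ∃ y ∈ f j, G.Adj x y)

/-- Every vertex of `X` has at most `s` neighbours (w.r.t. `G`) inside `X`;
equivalently the subgraph of `G` induced on `X` has maximum degree at most `s`. -/
def MaxDegWithinLE {V : Type} (G : SimpleGraph V) (X : Set V) (s : ℕ) : Prop :=
  ∀ v ∈ X, ({u | u ∈ X ∧ G.Adj v u}).ncard ≤ s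

/-- Transfer connectivity of induced subgraphs along a map. -/
lemma connected_transfer {V W : Type} {G : SimpleGraph V} {H : SimpleGraph W}
    (A : Set V) (B : Set W) (φ : V → W)
    (hmap : ∀ a ∈ A, φ a ∈ B) (hsurj : ∀ b ∈ B, ∃ a ∈ A, φ a = b)
    (hadj : ∀ a₁ ∈ A, ∀ a₂ ∈ A, G.Adj a₁ a₂ → H.Adj (φ a₁) (φ a₂))
    (hc : (G.induce A).Connected) : (H.induce B).Connected := by
  refine SimpleGraph.Connected.map ⟨fun a => ⟨φ a.1, hmap a.1 a.2⟩, ?_⟩ ?_ hc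
  · intro a b hab
    exact hadj a.1 a.2 b.1 b.2 hab
  rintro ⟨b, hb⟩
  obtain ⟨a, ha, rfl⟩ := hsurj b hb
  exact ⟨⟨a, ha⟩, rfl⟩

/-- A function invariant on edges is constant on a connected induced subgraph. -/
lemma const_of_connected {V : Type} {G : SimpleGraph V} {A : Set V} {α : Type}
    (g : V → α) (h : ∀ a ∈ A, ∀ b ∈ A, G.Adj a b → g a = g b)
    (hc : (G.induce A).Preconnected) : ∀ a ∈ A, ∀ b ∈ A, g a = g b := by
  intro a ha b hb
  obtain ⟨w⟩ := hc ⟨a, ha⟩ ⟨b, hb⟩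
  have : ∀ (u v : A) (_ : (G.induce A).Walk u v), g u.1 = g v.1 := by
    intro u v w
    induction w with
    | nil => rfl
    | cons hadj _ ih => exact (h _ (by exact _root_.Subtype.coe_prop _) _ (Subtype.coe_prop _) hadj).trans ih
  exact this _ _ w
/-- apex vertex joined to `s+1` disjoint copies of `G`. -/
def Join (s : ℕ) {V : Type} (G : SimpleGraph V) : SimpleGraph (Option (Fin (s+1) × V)) where
  Adj a b := match a, b with
    | none, none => False
    | none, some _ => True
    | some _, none => True
    | some p, some q => p.1 = q.1 ∧ G.Adj p.2 q.2
  symm := by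
    constructor
    rintro (_|p) (_|q) h
    · exact h
    · trivial
    · trivial
    · exact ⟨h.1.symm, h.2.symm⟩
  loopless := by
    constructor
    rintro (_|p) h
    · exact h
    · exact h.2.ne rfl

lemma join_adj_some {s : ℕ} {V : Type} {G : SimpleGraph V} {p q : Fin (s+1) × V} :
    (Join s G).Adj (some p) (some q) ↔ p.1 = q.1 ∧ G.Adj p.2 q.2 := Iff.rfl

lemma join_adj_none {s : ℕ} {V : Type} {G : SimpleGraph V} {q : Fin (s+1) × V} :
    (Join s G).Adj none (some q) := trivial

/-- copy index of a vertex of the join (junk value `0` at the apex). -/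
def cpy {s : ℕ} {V : Type} (p : Option (Fin (s+1) × V)) : Fin (s+1) :=
  (Option.map Prod.fst p).getD 0

lemma join_no_minor {s k : ℕ} {V : Type} {G : SimpleGraph V}
    (hG : ¬ HasCompleteMinor G (k+2)) : ¬ HasCompleteMinor (Join s G) (k+3) := by
  rintro ⟨f, hne, hconn, hdisj, hadj⟩
  apply hG
  obtain ⟨i₀, hi₀⟩ : ∃ i₀ : Fin (k+3), ∀ i, none ∈ f i → i = i₀ := by
    by_cases h : ∃ i, (none : Option (Fin (s+1) × V)) ∈ f i
    · obtain ⟨i₀, hi₀⟩ := h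
      refine ⟨i₀, fun i hi => ?_⟩
      by_contra hne'
      exact Set.disjoint_left.mp (hdisj hne') hi hi₀
    · exact ⟨0, fun i hi => absurd ⟨i, hi⟩ h⟩
  set e : Fin (k+2) → Fin (k+3) := i₀.succAbove with he
  have hnn : ∀ j, (none : Option (Fin (s+1) × V)) ∉ f (e j) := by
    intro j hj
    exact i₀.succAbove_ne j (hi₀ _ hj)
  have hsome : ∀ j, ∀ a ∈ f (e j), ∃ p : Fin (s+1) × V, a = some p := by
    intro j a ha
    cases a with
    | none => exact absurd ha (hnn j)
    | some p => exact ⟨p, rfl⟩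
  -- cpy is constant on each branch set
  have hcopy : ∀ j, ∀ a ∈ f (e j), ∀ b ∈ f (e j), cpy a = cpy b := by
    intro j
    refine const_of_connected cpy ?_ (hconn (e j)).preconnected
    intro a ha b hb hab
    obtain ⟨p, rfl⟩ := hsome j a ha
    obtain ⟨q, rfl⟩ := hsome j b hb
    exact hab.1
  -- the common copy
  set C : Fin (k+2) → Fin (s+1) := fun j => cpy ((hne (e j)).choose) with hC
  have hCconst : ∀ j j', j ≠ j' → C j = C j' := by
    intro j j' hjj'
    obtain ⟨x, hx, y, hy, hxy⟩ := hadj (e j) (e j')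
      (fun h => hjj' (Fin.succAbove_right_injective h))
    obtain ⟨p, rfl⟩ := hsome j x hx
    obtain ⟨q, rfl⟩ := hsome j' y hy
    calc C j = cpy (some p) := hcopy j _ (hne (e j)).choose_spec _ hx
      _ = cpy (some q) := hxy.1
      _ = C j' := hcopy j' _ hy _ (hne (e j')).choose_spec
  have hCall : ∀ j, C j = C 0 := by
    intro j
    by_cases h : j = 0
    · rw [h]
    · exact hCconst j 0 h
  -- every element of f (e j) lies in copy C 0
  have hmem : ∀ j, ∀ a ∈ f (e j), ∃ x : V, a = some (C 0, x) := by
    intro j a ha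
    obtain ⟨p, rfl⟩ := hsome j a ha
    refine ⟨p.2, ?_⟩
    have h1 : cpy (some p) = C j := hcopy j _ ha _ (hne (e j)).choose_spec
    have h2 : p.1 = C 0 := by
      have : cpy (some p) = p.1 := rfl
      rw [this] at h1; rw [h1, hCall j]
    exact congrArg some (Prod.ext h2 rfl)
  set g : Fin (k+2) → Set V := fun j => {x | some (C 0, x) ∈ f (e j)} with hg
  have hgne : ∀ j, (g j).Nonempty := by
    intro j
    obtain ⟨x, hx⟩ := hmem j _ (hne (e j)).choose_spec
    exact ⟨x, by rw [hg]; simpa [← hx] using (hne (e j)).choose_spec⟩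
  refine ⟨g, hgne, ?_, ?_, ?_⟩
  · -- connectivity
    intro j
    obtain ⟨x₀, hx₀⟩ := hgne j
    refine connected_transfer (f (e j)) (g j)
      (fun p => (Option.map Prod.snd p).getD x₀) ?_ ?_ ?_ (hconn (e j))
    · intro a ha
      obtain ⟨x, rfl⟩ := hmem j a ha
      exact ha
    · intro b hb
      exact ⟨some (C 0, b), hb, rfl⟩
    · intro a₁ h₁ a₂ h₂ hadj'
      obtain ⟨x₁, rfl⟩ := hmem j a₁ h₁
      obtain ⟨x₂, rfl⟩ := hmem j a₂ h₂
      exact hadj'.2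
  · -- disjointness
    intro i j hij
    rw [Set.disjoint_left]
    intro x hxi hxj
    exact Set.disjoint_left.mp
      (hdisj (fun h => hij (Fin.succAbove_right_injective h))) hxi hxj
  · -- adjacency between branch sets
    intro i j hij
    obtain ⟨x, hx, y, hy, hxy⟩ := hadj (e i) (e j)
      (fun h => hij (Fin.succAbove_right_injective h))
    obtain ⟨a, rfl⟩ := hmem i x hx
    obtain ⟨b, rfl⟩ := hmem j y hy
    exact ⟨a, hx, b, hy, hxy.2⟩

lemma join_no_part {s k : ℕ} {V : Type} [Fintype V] {G : SimpleGraph V}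
    (hG : ¬ ∃ X : Fin k → Set V,
      (Pairwise fun i j => Disjoint (X i) (X j)) ∧ (⋃ i, X i) = Set.univ ∧
      ∀ i, MaxDegWithinLE G (X i) s) :
    ¬ ∃ X : Fin (k+1) → Set (Option (Fin (s+1) × V)),
      (Pairwise fun i j => Disjoint (X i) (X j)) ∧ (⋃ i, X i) = Set.univ ∧
      ∀ i, MaxDegWithinLE (Join s G) (X i) s := by
  rintro ⟨X, hdisj, huniv, hdeg⟩
  apply hG
  have hmemU : (none : Option (Fin (s+1) × V)) ∈ ⋃ i, X i := huniv ▸ Set.mem_univ _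
  obtain ⟨i₀, hi₀⟩ := Set.mem_iUnion.mp hmemU
  -- find a copy avoiding `X i₀`
  obtain ⟨c, hc⟩ : ∃ c : Fin (s+1), ∀ x : V, some (c, x) ∉ X i₀ := by
    by_contra h
    push_neg at h
    choose w hw using h
    have hinj : Function.Injective
        (fun c : Fin (s+1) => (some (c, w c) : Option (Fin (s+1) × V))) := by
      intro a b hab
      exact congrArg cpy hab
    have hsub : Set.range (fun c : Fin (s+1) => (some (c, w c) : Option (Fin (s+1) × V)))
        ⊆ {u | u ∈ X i₀ ∧ (Join s G).Adj none u} := by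
      rintro _ ⟨c, rfl⟩
      exact ⟨hw c, trivial⟩
    have h1 : (Set.range fun c : Fin (s+1) =>
        (some (c, w c) : Option (Fin (s+1) × V))).ncard = s+1 := by
      rw [← Set.image_univ, Set.ncard_image_of_injective _ hinj, Set.ncard_univ]
      simp
    have h2 := Set.ncard_le_ncard hsub (Set.toFinite _)
    have h3 := hdeg i₀ none hi₀
    omega
  set e : Fin k → Fin (k+1) := i₀.succAbove with he
  refine ⟨fun j => {x | some (c, x) ∈ X (e j)}, ?_, ?_, ?_⟩
  · intro i j hij
    rw [Set.disjoint_left]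
    intro x hxi hxj
    exact Set.disjoint_left.mp
      (hdisj (fun h => hij (Fin.succAbove_right_injective h))) hxi hxj
  · rw [Set.eq_univ_iff_forall]
    intro x
    have : (some (c, x) : Option (Fin (s+1) × V)) ∈ ⋃ i, X i := huniv ▸ Set.mem_univ _
    obtain ⟨i, hi⟩ := Set.mem_iUnion.mp this
    have hne : i ≠ i₀ := fun h => hc x (h ▸ hi)
    obtain ⟨j, hj⟩ := Fin.exists_succAbove_eq hne
    exact Set.mem_iUnion.mpr ⟨j, by simp only [Set.mem_setOf_eq, he, hj]; exact hi⟩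
  · intro j v hv
    have key := hdeg (e j) (some (c, v)) hv
    refine le_trans ?_ key
    refine Set.ncard_le_ncard_of_injOn (fun u => some (c, u)) ?_ ?_ (Set.toFinite _)
    · rintro u ⟨hu, hadj⟩
      exact ⟨hu, rfl, hadj⟩
    · intro a _ b _ hab
      simpa using hab

lemma aux (s : ℕ) : ∀ k : ℕ, ∃ (V : Type) (_ : Fintype V) (G : SimpleGraph V),
    ¬ HasCompleteMinor G (k + 2) ∧
    ¬ ∃ X : Fin k → Set V,
      (Pairwise fun i j => Disjoint (X i) (X j)) ∧ (⋃ i, X i) = Set.univ ∧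
      ∀ i, MaxDegWithinLE G (X i) s := by
  intro k
  induction k with
  | zero =>
    refine ⟨Fin 1, inferInstance, ⊥, ?_, ?_⟩
    · rintro ⟨f, hne, hconn, hdisj, hadj⟩
      obtain ⟨x, hx, y, hy, hxy⟩ := hadj 0 1 (by decide)
      exact hxy
    · rintro ⟨X, hdisj, huniv, hdeg⟩
      have h0 : (0 : Fin 1) ∈ ⋃ i, X i := huniv ▸ Set.mem_univ _
      obtain ⟨i, _⟩ := Set.mem_iUnion.mp h0
      exact i.elim0
  | succ k ih =>
    obtain ⟨V, hfin, G, hminor, hpart⟩ := ih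
    haveI := hfin
    exact ⟨Option (Fin (s+1) × V), inferInstance, Join s G,
      join_no_minor hminor, join_no_part hpart⟩

/-- For all `s ≥ 0` and `t ≥ 1` there is a finite graph `G` with no `K_{t+1}` minor
admitting no partition of its vertex set into `t − 1` sets each inducing a subgraph
of maximum degree at most `s`. -/
theorem sharpness (s t : ℕ) (ht : 1 ≤ t) :
    ∃ (n : ℕ) (G : SimpleGraph (Fin n)),
      ¬ HasCompleteMinor G (t + 1) ∧
      ¬ ∃ X : Fin (t - 1) → Set (Fin n),
          (Pairwise fun i j => Disjoint (X i) (X j)) ∧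
          (⋃ i, X i) = Set.univ ∧
          ∀ i, MaxDegWithinLE G (X i) s := by
  obtain ⟨V, hfin, G, hminor, hpart⟩ := aux s (t - 1)
  haveI := hfin
  have ht2 : t - 1 + 2 = t + 1 := by omega
  rw [ht2] at hminor
  set e := Fintype.equivFin V with he
  refine ⟨Fintype.card V, G.comap ⇑e.symm, ?_, ?_⟩
  · rintro ⟨f, hne, hconn, hdisj, hadj⟩
    apply hminor
    refine ⟨fun i => e.symm '' f i, fun i => (hne i).image _, ?_, ?_, ?_⟩
    · intro i
      refine connected_transfer (f i) (e.symm '' f i) e.symm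
        (fun a ha => Set.mem_image_of_mem _ ha) ?_ (fun a₁ _ a₂ _ h => h) (hconn i)
      rintro _ ⟨a, ha, rfl⟩
      exact ⟨a, ha, rfl⟩
    · intro i j hij
      exact (Set.disjoint_image_iff e.symm.injective).mpr (hdisj hij)
    · intro i j hij
      obtain ⟨x, hx, y, hy, hxy⟩ := hadj i j hij
      exact ⟨e.symm x, Set.mem_image_of_mem _ hx, e.symm y, Set.mem_image_of_mem _ hy, hxy⟩
  · rintro ⟨X, hdisj, huniv, hdeg⟩
    apply hpart
    refine ⟨fun i => e.symm '' X i, ?_, ?_, ?_⟩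
    · intro i j hij
      exact (Set.disjoint_image_iff e.symm.injective).mpr (hdisj hij)
    · rw [← Set.image_iUnion, huniv, Set.image_univ]
      exact e.symm.range_eq_univ
    · rintro i _ ⟨a, ha, rfl⟩
      have heq : {u | u ∈ e.symm '' X i ∧ G.Adj (e.symm a) u}
          = e.symm '' {u | u ∈ X i ∧ (G.comap ⇑e.symm).Adj a u} := by
        ext u
        constructor
        · rintro ⟨⟨b, hb, rfl⟩, hadj'⟩
          exact ⟨b, ⟨hb, hadj'⟩, rfl⟩
        · rintro ⟨b, ⟨hb, hadj'⟩, rfl⟩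
          exact ⟨⟨b, hb, rfl⟩, hadj'⟩
      rw [heq, Set.ncard_image_of_injective _ e.symm.injective]
      exact hdeg i a ha
end

section
/- There exists a real constant C > 0 such that for every integer t ≥ 0 and every finite simple graph G, if K_{t+1} is not a minor of G, then the number of edges of G is at most C·(t+1)·(log(t+1))^{1/2}·|V(G)|, where log denotes the natural logarithm. -/
open Finset


set_option maxHeartbeats 1000000

namespace KT
variable {V : Type}

def ReachIn (G : SimpleGraph V) (B : Set V) (x y : V) : Prop :=
  Relation.ReflTransGen (fun a b => a ∈ B ∧ b ∈ B ∧ G.Adj a b) x y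

lemma ReachIn.mono {G : SimpleGraph V} {B B' : Set V} (h : B ⊆ B') {x y : V}
    (hr : ReachIn G B x y) : ReachIn G B' x y :=
  Relation.ReflTransGen.mono (fun _ _ hab => ⟨h hab.1, h hab.2.1, hab.2.2⟩) _ _ hr

def GoodFam {V : Type} (G : SimpleGraph V) (n : ℕ) (f : Fin n → Finset V) : Prop :=
  (∀ i, (f i).Nonempty) ∧
  (∀ i, ∃ rt ∈ f i, ∀ x ∈ f i, ReachIn G (f i : Set V) x rt) ∧
  (Pairwise fun i j => Disjoint (f i) (f j)) ∧
  (∀ i j, i ≠ j → ∃ x ∈ f i, ∃ y ∈ f j, G.Adj x y)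

def MyMinor {V : Type} (G : SimpleGraph V) (n : ℕ) : Prop := ∃ f, GoodFam G n f

section Greedy
variable [Fintype V] [DecidableEq V]

/-- vertices of `P` with no neighbour in `S`. -/
def uncov (G : SimpleGraph V) [DecidableRel G.Adj] (S P : Finset V) : Finset V :=
  P.filter (fun q => ∀ x ∈ S, ¬ G.Adj x q)

lemma uncov_subset (G : SimpleGraph V) [DecidableRel G.Adj] (S P : Finset V) :
    uncov G S P ⊆ P := Finset.filter_subset _ _

lemma uncov_mono_right (G : SimpleGraph V) [DecidableRel G.Adj] (S : Finset V)
    {P P' : Finset V} (h : P ⊆ P') : uncov G S P ⊆ uncov G S P' :=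
  Finset.filter_subset_filter _ h

lemma uncov_anti_left (G : SimpleGraph V) [DecidableRel G.Adj] {S S' : Finset V}
    (h : S ⊆ S') (P : Finset V) : uncov G S' P ⊆ uncov G S P := by
  intro q hq
  simp only [uncov, Finset.mem_filter] at hq ⊢
  exact ⟨hq.1, fun x hx => hq.2 x (h hx)⟩

lemma exists_small {P : Finset V} (hP : P.Nonempty) (f : V → ℝ) :
    ∃ v ∈ P, (P.card : ℝ) * f v ≤ ∑ w ∈ P, f w := by
  obtain ⟨v, hv, hmin⟩ := P.exists_min_image f hP
  exact ⟨v, hv, by simpa [nsmul_eq_mul] using Finset.card_nsmul_le_sum P f (f v) hmin⟩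

lemma double_count (G : SimpleGraph V) [DecidableRel G.Adj] (P Q : Finset V) :
    ∑ v ∈ P, ((Q.filter (fun q => ¬ G.Adj v q)).card : ℝ)
      = ∑ q ∈ Q, ((P.filter (fun v => ¬ G.Adj v q)).card : ℝ) := by
  have : ∀ (A B : Finset V) (p : V → V → Prop) [DecidableRel p],
      ∑ v ∈ A, ((B.filter (fun q => p v q)).card : ℝ)
        = ∑ q ∈ B, ((A.filter (fun v => p v q)).card : ℝ) := by
    intro A B p _
    simp only [Finset.card_filter]
    push_cast
    rw [Finset.sum_comm]
  exact this P Q (fun v q => ¬ G.Adj v q)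

lemma nonnbr_bound (G : SimpleGraph V) [DecidableRel G.Adj] {Ω P : Finset V}
    (hPΩ : P ⊆ Ω) {q : V} (hq : q ∈ Ω)
    (hdeg : (0.48 : ℝ) * Ω.card ≤ ((Ω.filter (G.Adj q)).card : ℝ)) :
    ((P.filter (fun v => ¬ G.Adj v q)).card : ℝ) ≤ 0.52 * Ω.card := by
  have hsub : P.filter (fun v => ¬ G.Adj v q) ⊆ Ω \ (Ω.filter (G.Adj q)) := by
    intro v hv
    simp only [Finset.mem_filter, Finset.mem_sdiff] at hv ⊢
    exact ⟨hPΩ hv.1, fun h => hv.2 (h.2.symm)⟩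
  have h1 : ((P.filter (fun v => ¬ G.Adj v q)).card : ℝ)
      ≤ ((Ω \ (Ω.filter (G.Adj q))).card : ℝ) := by
    exact_mod_cast Finset.card_le_card hsub
  have h2 : (Ω \ (Ω.filter (G.Adj q))).card = Ω.card - (Ω.filter (G.Adj q)).card :=
    Finset.card_sdiff_of_subset (Finset.filter_subset _ _)
  have h3 : ((Ω.filter (G.Adj q)).card : ℝ) ≤ (Ω.card : ℝ) := by
    exact_mod_cast Finset.card_le_card (Finset.filter_subset _ _)
  rw [h2] at h1
  have h4 : ((Ω.card - (Ω.filter (G.Adj q)).card : ℕ) : ℝ)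
      = (Ω.card : ℝ) - ((Ω.filter (G.Adj q)).card : ℝ) := by
    have := Finset.card_le_card (Finset.filter_subset (G.Adj q) Ω)
    push_cast [Nat.cast_sub this]
    ring
  rw [h4] at h1
  linarith

/-- Key shrinking lemma: a small set `S ⊆ P` whose neighbourhood covers all
of `P` except an exponentially small fraction. -/
lemma shrink (G : SimpleGraph V) [DecidableRel G.Adj] (Ω : Finset V)
    (hdeg : ∀ x ∈ Ω, (0.48 : ℝ) * Ω.card ≤ ((Ω.filter (G.Adj x)).card : ℝ))
    (P : Finset V) (hPΩ : P ⊆ Ω) (hPc : (0.95 : ℝ) * Ω.card ≤ P.card) :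
    ∀ m : ℕ, ∃ S : Finset V, S ⊆ P ∧ S.card ≤ m ∧
      ((uncov G S P).card : ℝ) ≤ (0.55 : ℝ) ^ m * Ω.card := by
  intro m
  induction m with
  | zero =>
      refine ⟨∅, Finset.empty_subset _, le_refl _, ?_⟩
      simp only [pow_zero, one_mul]
      exact_mod_cast Finset.card_le_card ((uncov_subset G ∅ P).trans hPΩ)
  | succ m ih =>
      obtain ⟨S, hSP, hScard, hq⟩ := ih
      by_cases hdone : ((uncov G S P).card : ℝ) ≤ (0.55 : ℝ) ^ (m + 1) * Ω.card
      · exact ⟨S, hSP, hScard.trans (Nat.le_succ m), hdone⟩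
      · set Q := uncov G S P with hQdef
        have hΩpos : (0 : ℝ) < Ω.card := by
          by_contra h
          push_neg at h
          have : ((uncov G S P).card : ℝ) ≤ 0 := by
            nlinarith [pow_nonneg (by norm_num : (0:ℝ) ≤ (0.55:ℝ)) (m+1), hq,
              pow_nonneg (by norm_num : (0:ℝ) ≤ (0.55:ℝ)) m]
          exact hdone (by nlinarith [pow_nonneg (by norm_num : (0:ℝ) ≤ (0.55:ℝ)) (m+1)])
        have hPpos : (0 : ℝ) < P.card := by nlinarith
        have hPne : P.Nonempty := Finset.card_pos.1 (by exact_mod_cast hPpos)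
        -- double counting to find a good vertex v ∈ P
        have hsum : ∑ v ∈ P, ((Q.filter (fun q => ¬ G.Adj v q)).card : ℝ)
            ≤ (Q.card : ℝ) * (0.52 * Ω.card) := by
          rw [double_count]
          have : ∀ q ∈ Q, ((P.filter (fun v => ¬ G.Adj v q)).card : ℝ) ≤ 0.52 * Ω.card := by
            intro q hqQ
            have hqΩ : q ∈ Ω := hPΩ (uncov_subset G S P hqQ)
            exact nonnbr_bound G hPΩ hqΩ (hdeg q hqΩ)
          calc ∑ q ∈ Q, ((P.filter (fun v => ¬ G.Adj v q)).card : ℝ)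
              ≤ ∑ _q ∈ Q, (0.52 * (Ω.card : ℝ)) := Finset.sum_le_sum this
            _ = (Q.card : ℝ) * (0.52 * Ω.card) := by rw [Finset.sum_const, nsmul_eq_mul]
        obtain ⟨v, hvP, hvmin⟩ := exists_small hPne (fun v => ((Q.filter (fun q => ¬ G.Adj v q)).card : ℝ))
        have hvsmall : ((Q.filter (fun q => ¬ G.Adj v q)).card : ℝ) ≤ 0.55 * Q.card := by
          have h1 : (P.card : ℝ) * ((Q.filter (fun q => ¬ G.Adj v q)).card : ℝ)
              ≤ (Q.card : ℝ) * (0.52 * Ω.card) := le_trans hvmin hsum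
          have hQnn : (0:ℝ) ≤ (Q.card : ℝ) := Nat.cast_nonneg _
          have hxnn : (0:ℝ) ≤ ((Q.filter (fun q => ¬ G.Adj v q)).card : ℝ) := Nat.cast_nonneg _
          nlinarith [mul_le_mul_of_nonneg_right hPc hxnn]
        refine ⟨insert v S, Finset.insert_subset hvP hSP,
          (Finset.card_insert_le _ _).trans (Nat.succ_le_succ hScard), ?_⟩
        have hsub : uncov G (insert v S) P ⊆ Q.filter (fun q => ¬ G.Adj v q) := by
          intro q hq'
          simp only [uncov, Finset.mem_filter, Finset.mem_insert] at hq'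
          rw [Finset.mem_filter]
          constructor
          · rw [hQdef]
            simp only [uncov, Finset.mem_filter]
            exact ⟨hq'.1, fun x hx => hq'.2 x (Or.inr hx)⟩
          · exact hq'.2 v (Or.inl rfl)
        have : ((uncov G (insert v S) P).card : ℝ) ≤ ((Q.filter (fun q => ¬ G.Adj v q)).card : ℝ) := by
          exact_mod_cast Finset.card_le_card hsub
        calc ((uncov G (insert v S) P).card : ℝ) ≤ 0.55 * Q.card := le_trans this hvsmall
          _ ≤ 0.55 * ((0.55:ℝ)^m * Ω.card) := by nlinarith
          _ = (0.55:ℝ)^(m+1) * Ω.card := by ring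

/-- pick covering vertices: after `m` greedy picks the number of previous blocks
not yet hit shrinks geometrically. -/
lemma cover (G : SimpleGraph V) [DecidableRel G.Adj] (Ω : Finset V) (s : ℕ) (hs : 1 ≤ s)
    (hΩpos : (0:ℝ) < Ω.card)
    (P : Finset V) (hPΩ : P ⊆ Ω) (hPc : (0.95 : ℝ) * Ω.card ≤ P.card)
    (i : ℕ) (S : ℕ → Finset V)
    (hqual : ∀ j < i, ((uncov G (S j) P).card : ℝ) ≤ (0.55 : ℝ) ^ s * Ω.card) :
    ∀ m : ℕ, ∃ Cov : Finset V, Cov ⊆ P ∧ Cov.card ≤ m ∧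
      ((((Finset.range i).filter
          (fun j => ∀ c ∈ Cov, ∀ x ∈ S j, ¬ G.Adj x c)).card : ℝ)
        ≤ ((0.58 : ℝ) ^ s) ^ m * i) := by
  intro m
  induction m with
  | zero =>
      refine ⟨∅, Finset.empty_subset _, le_refl _, ?_⟩
      simp only [pow_zero, one_mul]
      have h1 : ((Finset.range i).filter
          (fun j => ∀ c ∈ (∅:Finset V), ∀ x ∈ S j, ¬ G.Adj x c)).card ≤ i := by
        simpa using Finset.card_le_card (Finset.filter_subset
          (fun j => ∀ c ∈ (∅:Finset V), ∀ x ∈ S j, ¬ G.Adj x c) (Finset.range i))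
      exact_mod_cast h1
  | succ m ih =>
      obtain ⟨Cov, hCP, hCcard, hT⟩ := ih
      set T := (Finset.range i).filter (fun j => ∀ c ∈ Cov, ∀ x ∈ S j, ¬ G.Adj x c) with hTdef
      by_cases hdone : ((T.card : ℝ)) ≤ ((0.58 : ℝ) ^ s) ^ (m+1) * i
      · exact ⟨Cov, hCP, hCcard.trans (Nat.le_succ m), hdone⟩
      · have hTpos : (0:ℝ) < T.card := by
          rcases Nat.eq_zero_or_pos T.card with h | h
          · exfalso; apply hdone
            rw [h]
            push_cast
            positivity
          · exact_mod_cast h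
        have hPpos : (0 : ℝ) < P.card := by nlinarith
        have hPne : P.Nonempty := Finset.card_pos.1 (by exact_mod_cast hPpos)
        -- double count pairs (c, j)
        have hswap : ∑ c ∈ P, ((T.filter (fun j => ∀ x ∈ S j, ¬ G.Adj x c)).card : ℝ)
            = ∑ j ∈ T, ((P.filter (fun c => ∀ x ∈ S j, ¬ G.Adj x c)).card : ℝ) := by
          simp only [Finset.card_filter]
          push_cast
          rw [Finset.sum_comm]
        have hsum : ∑ c ∈ P, ((T.filter (fun j => ∀ x ∈ S j, ¬ G.Adj x c)).card : ℝ)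
            ≤ (T.card : ℝ) * ((0.55 : ℝ) ^ s * Ω.card) := by
          rw [hswap]
          have hb : ∀ j ∈ T, ((P.filter (fun c => ∀ x ∈ S j, ¬ G.Adj x c)).card : ℝ)
              ≤ (0.55 : ℝ) ^ s * Ω.card := by
            intro j hj
            have hji : j < i := Finset.mem_range.1 (Finset.filter_subset _ _ hj)
            have : P.filter (fun c => ∀ x ∈ S j, ¬ G.Adj x c) = uncov G (S j) P := rfl
            rw [this]
            exact hqual j hji
          calc ∑ j ∈ T, ((P.filter (fun c => ∀ x ∈ S j, ¬ G.Adj x c)).card : ℝ)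
              ≤ ∑ _j ∈ T, ((0.55 : ℝ) ^ s * (Ω.card:ℝ)) := Finset.sum_le_sum hb
            _ = (T.card : ℝ) * ((0.55 : ℝ) ^ s * Ω.card) := by rw [Finset.sum_const, nsmul_eq_mul]
        obtain ⟨c, hcP, hcmin⟩ := exists_small hPne
          (fun c => ((T.filter (fun j => ∀ x ∈ S j, ¬ G.Adj x c)).card : ℝ))
        have hkey : ((T.filter (fun j => ∀ x ∈ S j, ¬ G.Adj x c)).card : ℝ)
            ≤ (0.58 : ℝ) ^ s * T.card := by
          have h1 := le_trans hcmin hsum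
          have hxnn : (0:ℝ) ≤ ((T.filter (fun j => ∀ x ∈ S j, ¬ G.Adj x c)).card : ℝ) :=
            Nat.cast_nonneg _
          have hpow : (0.55 : ℝ) ^ s ≤ 0.95 * (0.58 : ℝ) ^ s := by
            have h58 : (0.58 : ℝ) ^ s = (0.58 : ℝ) ^ s := rfl
            have hfrac : (0.55 : ℝ) ^ s ≤ (0.55/0.58) * (0.58 : ℝ) ^ s := by
              have : (0.55 : ℝ) ^ s = ((0.55/0.58) : ℝ) ^ s * (0.58 : ℝ) ^ s := by
                rw [← mul_pow]; norm_num
              rw [this]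
              have h1' : ((0.55/0.58) : ℝ) ^ s ≤ ((0.55/0.58) : ℝ) ^ 1 :=
                pow_le_pow_of_le_one (by norm_num) (by norm_num) hs
              have h2' : (0:ℝ) ≤ (0.58 : ℝ) ^ s := by positivity
              nlinarith
            nlinarith [pow_nonneg (by norm_num : (0:ℝ) ≤ (0.58:ℝ)) s]
          nlinarith [mul_le_mul_of_nonneg_right hPc hxnn,
            mul_le_mul_of_nonneg_right hpow (le_of_lt (mul_pos hTpos hΩpos))]
        refine ⟨insert c Cov, Finset.insert_subset hcP hCP,
          (Finset.card_insert_le _ _).trans (Nat.succ_le_succ hCcard), ?_⟩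
        have hsub : (Finset.range i).filter
            (fun j => ∀ c' ∈ insert c Cov, ∀ x ∈ S j, ¬ G.Adj x c')
            ⊆ T.filter (fun j => ∀ x ∈ S j, ¬ G.Adj x c) := by
          intro j hj
          simp only [Finset.mem_filter, Finset.mem_insert] at hj
          rw [Finset.mem_filter]
          refine ⟨?_, hj.2 c (Or.inl rfl)⟩
          rw [hTdef, Finset.mem_filter]
          exact ⟨hj.1, fun c' hc' => hj.2 c' (Or.inr hc')⟩
        have hcc : (((Finset.range i).filter
            (fun j => ∀ c' ∈ insert c Cov, ∀ x ∈ S j, ¬ G.Adj x c')).card : ℝ)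
            ≤ ((T.filter (fun j => ∀ x ∈ S j, ¬ G.Adj x c)).card : ℝ) := by
          exact_mod_cast Finset.card_le_card hsub
        have hTm : (T.card : ℝ) ≤ ((0.58 : ℝ) ^ s) ^ m * i := hT
        calc (((Finset.range i).filter
            (fun j => ∀ c' ∈ insert c Cov, ∀ x ∈ S j, ¬ G.Adj x c')).card : ℝ)
            ≤ (0.58 : ℝ) ^ s * T.card := le_trans hcc hkey
          _ ≤ (0.58 : ℝ) ^ s * (((0.58 : ℝ) ^ s) ^ m * i) := by
              have : (0:ℝ) ≤ (0.58 : ℝ) ^ s := by positivity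
              nlinarith
          _ = ((0.58 : ℝ) ^ s) ^ (m+1) * i := by ring

/-- being joined by a path with at most 3 edges inside `W`. -/
def Joined3 (G : SimpleGraph V) (W : Finset V) (x y : V) : Prop :=
  G.Adj x y ∨ (∃ p ∈ W, G.Adj x p ∧ G.Adj p y) ∨
    (∃ p ∈ W, ∃ q ∈ W, G.Adj x p ∧ G.Adj p q ∧ G.Adj q y)

lemma joined3_reach {G : SimpleGraph V} {W : Finset V} {c rt : V}
    (h : Joined3 G W c rt) :
    ∃ pc : Finset V, pc ⊆ W ∧ pc.card ≤ 2 ∧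
      ∀ x ∈ insert c pc, ReachIn G (↑(insert rt (insert c pc)) : Set V) x rt := by
  classical
  rcases h with h | ⟨p, hp, h1, h2⟩ | ⟨p, hp, q, hq, h1, h2, h3⟩
  · refine ⟨∅, Finset.empty_subset _, by norm_num, ?_⟩
    intro x hx
    simp only [Finset.mem_insert, Finset.notMem_empty, or_false] at hx
    subst hx
    exact Relation.ReflTransGen.single ⟨by simp, by simp, h⟩
  · refine ⟨{p}, by simpa using hp, by norm_num, ?_⟩
    intro x hx
    have hpstep : ReachIn G (((insert rt (insert c ({p} : Finset V))) : Finset V) : Set V) p rt :=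
      Relation.ReflTransGen.single ⟨by simp, by simp, h2⟩
    simp only [Finset.mem_insert, Finset.mem_singleton] at hx
    rcases hx with rfl | rfl
    · exact Relation.ReflTransGen.head ⟨by simp, by simp, h1⟩ hpstep
    · exact hpstep
  · refine ⟨{p, q}, by intro z hz; simp only [Finset.mem_insert,
      Finset.mem_singleton] at hz; rcases hz with rfl | rfl <;> assumption,
      Finset.card_le_card (by intro z hz; exact hz) |>.trans (by
        have := Finset.card_insert_le p ({q} : Finset V)
        simpa using this), ?_⟩
    intro x hx
    have hqstep : ReachIn G (((insert rt (insert c ({p, q} : Finset V))) : Finset V) : Set V) q rt :=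
      Relation.ReflTransGen.single ⟨by simp, by simp, h3⟩
    have hpstep : ReachIn G (((insert rt (insert c ({p, q} : Finset V))) : Finset V) : Set V) p rt :=
      Relation.ReflTransGen.head ⟨by simp, by simp, h2⟩ hqstep
    simp only [Finset.mem_insert, Finset.mem_singleton] at hx
    rcases hx with rfl | rfl | rfl
    · exact Relation.ReflTransGen.head ⟨by simp, by simp, h1⟩ hpstep
    · exact hpstep
    · exact hqstep

lemma connect (G : SimpleGraph V) [DecidableRel G.Adj] (P : Finset V) (rt : V)
    (hJ : ∀ c ∈ P, c ≠ rt → Joined3 G P c rt) :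
    ∀ core : Finset V, core ⊆ P →
      ∃ E : Finset V, E ⊆ P ∧ E.card ≤ 2 * core.card ∧
        ∀ x ∈ core ∪ E, ReachIn G (↑(insert rt (core ∪ E)) : Set V) x rt := by
  intro core
  induction core using Finset.induction_on with
  | empty =>
      intro _
      exact ⟨∅, Finset.empty_subset _, by norm_num, by intro x hx; simp at hx⟩
  | @insert c core hc ih =>
      intro hsub
      have hcoreP : core ⊆ P := (Finset.subset_insert c core).trans hsub
      have hcP : c ∈ P := hsub (Finset.mem_insert_self c core)
      obtain ⟨E, hEP, hEcard, hreach⟩ := ih hcoreP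
      by_cases hceq : c = rt
      · refine ⟨E, hEP, hEcard.trans
          (Nat.mul_le_mul_left 2 (Finset.card_le_card (Finset.subset_insert c core))), ?_⟩
        intro x hx
        rcases Finset.mem_union.1 hx with hx | hx
        · rcases Finset.mem_insert.1 hx with rfl | hx
          · exact hceq ▸ Relation.ReflTransGen.refl
          · exact (hreach x (Finset.mem_union_left _ hx)).mono
              (by intro z hz; simp only [Finset.coe_insert, Set.mem_insert_iff,
                Finset.coe_union, Set.mem_union, Finset.mem_coe] at hz ⊢; tauto)
        · exact (hreach x (Finset.mem_union_right _ hx)).mono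
            (by intro z hz; simp only [Finset.coe_insert, Set.mem_insert_iff,
              Finset.coe_union, Set.mem_union, Finset.mem_coe] at hz ⊢; tauto)
      · obtain ⟨pc, hpcW, hpccard, hpcreach⟩ := joined3_reach (hJ c hcP hceq)
        refine ⟨E ∪ pc, Finset.union_subset hEP hpcW, ?_, ?_⟩
        · calc (E ∪ pc).card ≤ E.card + pc.card := Finset.card_union_le _ _
            _ ≤ 2 * core.card + 2 := by omega
            _ = 2 * (core.card + 1) := by ring
            _ = 2 * (insert c core).card := by rw [Finset.card_insert_of_notMem hc]
        · intro x hx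
          have hmono1 : (↑(insert rt (insert c pc)) : Set V)
              ⊆ (↑(insert rt (insert c core ∪ (E ∪ pc))) : Set V) := by
            intro z hz
            simp only [Finset.coe_insert, Set.mem_insert_iff, Finset.coe_union,
              Set.mem_union, Finset.mem_coe, Finset.mem_insert] at hz ⊢
            tauto
          have hmono2 : (↑(insert rt (core ∪ E)) : Set V)
              ⊆ (↑(insert rt (insert c core ∪ (E ∪ pc))) : Set V) := by
            intro z hz
            simp only [Finset.coe_insert, Set.mem_insert_iff, Finset.coe_union,
              Set.mem_union, Finset.mem_coe, Finset.mem_insert] at hz ⊢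
            tauto
          rcases Finset.mem_union.1 hx with hx | hx
          · rcases Finset.mem_insert.1 hx with rfl | hx
            · exact (hpcreach x (Finset.mem_insert_self _ _)).mono hmono1
            · exact (hreach x (Finset.mem_union_left _ hx)).mono hmono2
          · rcases Finset.mem_union.1 hx with hx | hx
            · exact (hreach x (Finset.mem_union_right _ hx)).mono hmono2
            · exact (hpcreach x (Finset.mem_insert_of_mem hx)).mono hmono1

theorem greedy (G : SimpleGraph V) [DecidableRel G.Adj] (Ω : Finset V) (r s : ℕ)
    (hs : 1 ≤ s)
    (hdeg : ∀ x ∈ Ω, (0.48 : ℝ) * Ω.card ≤ ((Ω.filter (G.Adj x)).card : ℝ))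
    (hjoin : ∀ W : Finset V, W ⊆ Ω → (0.94 : ℝ) * Ω.card ≤ W.card →
      ∀ x ∈ W, ∀ y ∈ W, x ≠ y → Joined3 G W x y)
    (h4 : (r : ℝ) * (12 * s) ≤ 0.04 * Ω.card)
    (h5 : (12 * (s:ℝ)) ≤ 0.01 * Ω.card)
    (h6 : (r : ℝ) * (0.58 : ℝ) ^ (2 * s * s) < 1) :
    MyMinor G r := by
  classical
  have hsR : (1:ℝ) ≤ (s:ℝ) := by exact_mod_cast hs
  have hu1200 : (1200 : ℝ) ≤ Ω.card := by nlinarith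
  have hΩpos : (0:ℝ) < Ω.card := by linarith
  have main : ∀ i : ℕ, i ≤ r → ∃ B S : ℕ → Finset V,
      (∀ j < i, S j ⊆ B j ∧ (S j).Nonempty) ∧
      (∀ j < i, B j ⊆ Ω \ (Finset.range j).biUnion B) ∧
      (∀ j < i, (B j).card ≤ 12 * s) ∧
      (∀ j < i, ∃ rt ∈ B j, ∀ x ∈ B j, ReachIn G (B j : Set V) x rt) ∧
      (∀ j l, j < l → l < i → ∃ c ∈ B l, ∃ x ∈ S j, G.Adj x c) ∧
      (∀ j < i, ((uncov G (S j) (Ω \ (Finset.range j).biUnion B)).card : ℝ)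
          ≤ (0.55:ℝ) ^ s * Ω.card) := by
    intro i
    induction i with
    | zero =>
        intro _
        exact ⟨fun _ => ∅, fun _ => ∅, fun j hj => absurd hj (by omega),
          fun j hj => absurd hj (by omega), fun j hj => absurd hj (by omega),
          fun j hj => absurd hj (by omega), fun j l _ hl => absurd hl (by omega),
          fun j hj => absurd hj (by omega)⟩
    | succ i ih =>
        intro hir
        obtain ⟨B, S, I1, I2, I3, I4, I5, I6⟩ := ih (Nat.le_of_succ_le hir)
        set P : Finset V := Ω \ (Finset.range i).biUnion B with hPdef
        have hPΩ : P ⊆ Ω := Finset.sdiff_subset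
        have hiR : (i:ℝ) ≤ (r:ℝ) := by exact_mod_cast Nat.le_of_succ_le hir
        have hTcard : (((Finset.range i).biUnion B).card : ℝ) ≤ (i:ℝ) * (12*s) := by
          have h1 : ((Finset.range i).biUnion B).card ≤ ∑ j ∈ Finset.range i, (B j).card :=
            Finset.card_biUnion_le
          have h2 : ∑ j ∈ Finset.range i, (B j).card ≤ (Finset.range i).card * (12*s) := by
            apply Finset.sum_le_card_nsmul
            intro j hj
            exact I3 j (Finset.mem_range.1 hj)
          rw [Finset.card_range] at h2
          have := le_trans h1 h2
          push_cast
          exact_mod_cast this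
        have hPcard : (0.96:ℝ) * Ω.card ≤ P.card := by
          have hsplit : Ω.card ≤ P.card + ((Finset.range i).biUnion B).card := by
            refine le_trans (Finset.card_le_card ?_) (Finset.card_union_le _ _)
            intro z hz
            by_cases hzT : z ∈ (Finset.range i).biUnion B
            · exact Finset.mem_union_right _ hzT
            · exact Finset.mem_union_left _ (Finset.mem_sdiff.2 ⟨hz, hzT⟩)
          have hsplit' : (Ω.card : ℝ) ≤ (P.card : ℝ) + (((Finset.range i).biUnion B).card : ℝ) := by
            exact_mod_cast hsplit
          have hir12 : (i:ℝ) * (12*s) ≤ 0.04 * Ω.card := by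
            have : (i:ℝ) * (12*s) ≤ (r:ℝ) * (12*s) := by nlinarith
            linarith
          linarith
        have hP95 : (0.95:ℝ) * Ω.card ≤ P.card := by linarith
        have hPpos : (0:ℝ) < P.card := by linarith
        have hPne : P.Nonempty := Finset.card_pos.1 (by exact_mod_cast hPpos)
        obtain ⟨x₀, hx₀P⟩ := hPne
        -- build S_new
        obtain ⟨S₀, hS₀P, hS₀card, hS₀q⟩ := shrink G Ω hdeg P hPΩ hP95 s
        set Snew : Finset V := insert x₀ S₀ with hSnewdef
        have hSnewP : Snew ⊆ P := Finset.insert_subset hx₀P hS₀P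
        have hSnewq : ((uncov G Snew P).card : ℝ) ≤ (0.55:ℝ)^s * Ω.card := by
          refine le_trans ?_ hS₀q
          exact_mod_cast Finset.card_le_card (uncov_anti_left G (Finset.subset_insert x₀ S₀) P)
        -- covering previous blocks
        have hqualP : ∀ j < i, ((uncov G (S j) P).card : ℝ) ≤ (0.55:ℝ)^s * Ω.card := by
          intro j hj
          refine le_trans ?_ (I6 j hj)
          have hPsub : P ⊆ Ω \ (Finset.range j).biUnion B := by
            apply Finset.sdiff_subset_sdiff (le_refl Ω)
            apply Finset.biUnion_subset_biUnion_of_subset_left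
            exact Finset.range_subset_range.2 (le_of_lt hj)
          exact_mod_cast Finset.card_le_card (uncov_mono_right G (S j) hPsub)
        obtain ⟨Cov, hCovP, hCovcard, hCovT⟩ :=
          cover G Ω s hs hΩpos P hPΩ hP95 i S hqualP (2*s)
        have hcovered : ∀ j < i, ∃ c ∈ Cov, ∃ x ∈ S j, G.Adj x c := by
          have hlt1 : (((Finset.range i).filter
              (fun j => ∀ c ∈ Cov, ∀ x ∈ S j, ¬ G.Adj x c)).card : ℝ) < 1 := by
            refine lt_of_le_of_lt hCovT ?_
            have hpe : ((0.58:ℝ)^s)^(2*s) = (0.58:ℝ)^(2*s*s) := by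
              rw [← pow_mul]
              ring_nf
            rw [hpe]
            calc (0.58:ℝ)^(2*s*s) * (i:ℝ) ≤ (0.58:ℝ)^(2*s*s) * (r:ℝ) := by
                  have : (0:ℝ) ≤ (0.58:ℝ)^(2*s*s) := by positivity
                  nlinarith
              _ < 1 := by rw [mul_comm]; exact h6
          have hzero : ((Finset.range i).filter
              (fun j => ∀ c ∈ Cov, ∀ x ∈ S j, ¬ G.Adj x c)) = ∅ := by
            have : ((Finset.range i).filter
                (fun j => ∀ c ∈ Cov, ∀ x ∈ S j, ¬ G.Adj x c)).card = 0 := by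
              by_contra h
              have h1 : 1 ≤ ((Finset.range i).filter
                  (fun j => ∀ c ∈ Cov, ∀ x ∈ S j, ¬ G.Adj x c)).card := Nat.one_le_iff_ne_zero.2 h
              have : (1:ℝ) ≤ (((Finset.range i).filter
                  (fun j => ∀ c ∈ Cov, ∀ x ∈ S j, ¬ G.Adj x c)).card : ℝ) := by exact_mod_cast h1
              linarith
            exact Finset.card_eq_zero.1 this
          intro j hj
          have hjnot : j ∉ ((Finset.range i).filter
              (fun j => ∀ c ∈ Cov, ∀ x ∈ S j, ¬ G.Adj x c)) := by rw [hzero]; simp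
          rw [Finset.mem_filter] at hjnot
          push_neg at hjnot
          obtain ⟨c, hc, x, hx, hadj⟩ := hjnot (Finset.mem_range.2 hj)
          exact ⟨c, hc, x, hx, hadj⟩
        -- connect everything
        set core : Finset V := Snew ∪ Cov with hcoredef
        have hcoreP : core ⊆ P := Finset.union_subset hSnewP hCovP
        have hJ : ∀ c ∈ P, c ≠ x₀ → Joined3 G P c x₀ := by
          intro c hc hne
          exact hjoin P hPΩ (by linarith) c hc x₀ hx₀P hne
        obtain ⟨E, hEP, hEcard, hreach⟩ := connect G P x₀ hJ core hcoreP
        set Bnew : Finset V := insert x₀ (core ∪ E) with hBnewdef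
        have hBnewP : Bnew ⊆ P :=
          Finset.insert_subset hx₀P (Finset.union_subset hcoreP hEP)
        have hBneweq : Bnew = core ∪ E := by
          rw [hBnewdef]
          exact Finset.insert_eq_self.2 (Finset.mem_union_left _
            (Finset.mem_union_left _ (Finset.mem_insert_self x₀ S₀)))
        have hBnewcard : Bnew.card ≤ 12 * s := by
          have h1 : Bnew.card = (core ∪ E).card := by rw [hBneweq]
          have h2 : (core ∪ E).card ≤ core.card + E.card := Finset.card_union_le _ _
          have h3 : core.card ≤ Snew.card + Cov.card := Finset.card_union_le _ _
          have h4' : Snew.card ≤ s + 1 := by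
            rw [hSnewdef]
            exact (Finset.card_insert_le _ _).trans (Nat.succ_le_succ hS₀card)
          have h5' : E.card ≤ 2 * core.card := hEcard
          omega
        have hBnewreach : ∀ x ∈ Bnew, ReachIn G (Bnew : Set V) x x₀ := by
          intro x hx
          rcases Finset.mem_insert.1 hx with rfl | hx
          · exact Relation.ReflTransGen.refl
          · exact hreach x hx
        -- update families
        set B' : ℕ → Finset V := Function.update B i Bnew with hB'def
        set S' : ℕ → Finset V := Function.update S i Snew with hS'def
        have hB'i : B' i = Bnew := Function.update_self i Bnew B
        have hS'i : S' i = Snew := Function.update_self i Snew S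
        have hB'old : ∀ j, j ≠ i → B' j = B j := fun j hj => Function.update_of_ne hj Bnew B
        have hS'old : ∀ j, j ≠ i → S' j = S j := fun j hj => Function.update_of_ne hj Snew S
        have hpool : ∀ j, j ≤ i → (Finset.range j).biUnion B' = (Finset.range j).biUnion B := by
          intro j hj
          apply Finset.biUnion_congr rfl
          intro l hl
          exact hB'old l (by have := Finset.mem_range.1 hl; omega)
        refine ⟨B', S', ?_, ?_, ?_, ?_, ?_, ?_⟩
        · intro j hj
          rcases Nat.lt_succ_iff_lt_or_eq.1 hj with hj | hje
          · rw [hB'old j (by omega), hS'old j (by omega)]; exact I1 j hj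
          · subst hje
            rw [hB'i, hS'i, hBnewdef, hSnewdef, hcoredef, hSnewdef]
            exact ⟨fun z hz => Finset.mem_insert_of_mem (Finset.mem_union_left _
              (Finset.mem_union_left _ hz)), ⟨x₀, Finset.mem_insert_self _ _⟩⟩
        · intro j hj
          rcases Nat.lt_succ_iff_lt_or_eq.1 hj with hj | hje
          · rw [hB'old j (by omega), hpool j (by omega)]; exact I2 j hj
          · subst hje
            rw [hB'i, hpool _ (le_refl _)]; exact hBnewP
        · intro j hj
          rcases Nat.lt_succ_iff_lt_or_eq.1 hj with hj | hje
          · rw [hB'old j (by omega)]; exact I3 j hj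
          · subst hje
            rw [hB'i]; exact hBnewcard
        · intro j hj
          rcases Nat.lt_succ_iff_lt_or_eq.1 hj with hj | hje
          · rw [hB'old j (by omega)]; exact I4 j hj
          · subst hje
            rw [hB'i, hBnewdef]
            exact ⟨x₀, Finset.mem_insert_self _ _, by rw [← hBnewdef]; exact hBnewreach⟩
        · intro j l hjl hl
          rcases Nat.lt_succ_iff_lt_or_eq.1 hl with hl | hle
          · rw [hB'old l (by omega), hS'old j (by omega)]; exact I5 j l hjl hl
          · subst hle
            rw [hB'i, hS'old j (by omega), hBnewdef]
            obtain ⟨c, hc, x, hx, hadj⟩ := hcovered j hjl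
            exact ⟨c, Finset.mem_insert_of_mem (Finset.mem_union_left _
              (Finset.mem_union_right _ hc)), x, hx, hadj⟩
        · intro j hj
          rcases Nat.lt_succ_iff_lt_or_eq.1 hj with hj | hje
          · rw [hS'old j (by omega), hpool j (by omega)]; exact I6 j hj
          · subst hje
            rw [hS'i, hpool _ (le_refl _)]; exact hSnewq
  -- extract the family
  obtain ⟨B, S, I1, I2, I3, I4, I5, I6⟩ := main r (le_refl r)
  refine ⟨fun j => B j.1, ?_, ?_, ?_, ?_⟩
  · intro j
    obtain ⟨hSB, hSne⟩ := I1 j.1 j.2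
    exact hSne.mono hSB
  · intro j
    exact I4 j.1 j.2
  · intro j l hjl
    have hne : j.1 ≠ l.1 := fun h => hjl (Fin.ext h)
    have key : ∀ a b : ℕ, a < b → b < r → Disjoint (B a) (B b) := by
      intro a b hab hbr
      rw [Finset.disjoint_left]
      intro z hza hzb
      have hzB : z ∈ (Finset.range b).biUnion B :=
        Finset.mem_biUnion.2 ⟨a, Finset.mem_range.2 hab, hza⟩
      have := I2 b hbr hzb
      rw [Finset.mem_sdiff] at this
      exact this.2 hzB
    rcases Nat.lt_or_ge j.1 l.1 with h | h
    · exact key j.1 l.1 h l.2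
    · have h' : l.1 < j.1 := by omega
      exact (key l.1 j.1 h' j.2).symm
  · intro j l hjl
    have hne : j.1 ≠ l.1 := fun h => hjl (Fin.ext h)
    rcases Nat.lt_or_ge j.1 l.1 with h | h
    · obtain ⟨c, hc, x, hx, hadj⟩ := I5 j.1 l.1 h l.2
      exact ⟨x, (I1 j.1 j.2).1 hx, c, hc, hadj⟩
    · have h' : l.1 < j.1 := by omega
      obtain ⟨c, hc, x, hx, hadj⟩ := I5 l.1 j.1 h' j.2
      exact ⟨c, hc, x, (I1 l.1 l.2).1 hx, hadj.symm⟩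

lemma exp_half_bounds : (0.58:ℝ) ≤ Real.exp (-(1/2) : ℝ) := by
  have hpos : (0:ℝ) < Real.exp ((1:ℝ)/2) := Real.exp_pos _
  have he1 : Real.exp ((1:ℝ)/2) * Real.exp ((1:ℝ)/2) = Real.exp 1 := by
    rw [← Real.exp_add]; norm_num
  have he2 : Real.exp ((1:ℝ)/2) ≤ 1.649 := by nlinarith [Real.exp_one_lt_d9]
  have hinv : (Real.exp ((1:ℝ)/2))⁻¹ * Real.exp ((1:ℝ)/2) = 1 :=
    inv_mul_cancel₀ (ne_of_gt hpos)
  have : Real.exp (-(1/2) : ℝ) = (Real.exp ((1:ℝ)/2))⁻¹ := by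
    rw [Real.exp_neg]
  rw [this]
  nlinarith [hinv, hpos]

lemma apply_greedy (G : SimpleGraph V) [DecidableRel G.Adj] (D : Finset V) (r : ℕ)
    (hdegD : ∀ x ∈ D, (0.48 : ℝ) * D.card ≤ ((D.filter (G.Adj x)).card : ℝ))
    (hjoinD : ∀ W : Finset V, W ⊆ D → (0.94 : ℝ) * D.card ≤ W.card →
      ∀ x ∈ W, ∀ y ∈ W, x ≠ y → Joined3 G W x y)
    (hDbig : (4000000 : ℝ) ≤ (D.card : ℝ))
    (hrD : (3000 : ℝ) * r * (Real.sqrt (Real.log D.card) + 1) ≤ (D.card : ℝ)) :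
    MyMinor G r := by
  classical
  have hd0 : (0:ℝ) < (D.card:ℝ) := by linarith
  have hd1 : (1:ℝ) ≤ (D.card:ℝ) := by linarith
  have hlog0 : (0:ℝ) ≤ Real.log D.card := Real.log_nonneg hd1
  set x : ℝ := Real.sqrt (Real.log D.card) with hxdef
  have hx0 : 0 ≤ x := Real.sqrt_nonneg _
  set s : ℕ := ⌈x⌉₊ + 1 with hsdef
  have hs : 1 ≤ s := Nat.succ_le_succ (Nat.zero_le _)
  have hsx : x ≤ (s:ℝ) := by
    refine le_trans (Nat.le_ceil x) ?_
    rw [hsdef]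
    push_cast
    linarith
  have hsx2 : (s:ℝ) ≤ x + 2 := by
    have h := Nat.ceil_lt_add_one hx0
    rw [hsdef]
    push_cast
    linarith
  have hlogled : Real.log D.card ≤ (D.card:ℝ) := by
    nlinarith [Real.log_le_sub_one_of_pos hd0]
  have hxd : x ≤ Real.sqrt D.card := Real.sqrt_le_sqrt hlogled
  have hsqd : (2000:ℝ) ≤ Real.sqrt D.card := by
    have h1 : Real.sqrt ((2000:ℝ)^2) ≤ Real.sqrt D.card := Real.sqrt_le_sqrt (by nlinarith)
    rwa [Real.sqrt_sq (by norm_num : (0:ℝ) ≤ 2000)] at h1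
  have hsd : Real.sqrt (D.card:ℝ) * Real.sqrt (D.card:ℝ) = (D.card:ℝ) :=
    Real.mul_self_sqrt hd0.le
  have hrpos : (0:ℝ) ≤ (r:ℝ) := Nat.cast_nonneg r
  have h5 : 12 * (s:ℝ) ≤ 0.01 * D.card := by nlinarith
  have h4 : (r:ℝ) * (12*s) ≤ 0.04 * D.card := by nlinarith
  have h6 : (r:ℝ) * (0.58:ℝ)^(2*s*s) < 1 := by
    have hpow1 : (0.58:ℝ)^(2*s*s) ≤ (Real.exp (-(1/2):ℝ))^(2*s*s) :=
      pow_le_pow_left₀ (by norm_num) exp_half_bounds _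
    have hpow2 : (Real.exp (-(1/2):ℝ))^(2*s*s) = Real.exp (-(((2*s*s : ℕ):ℝ))/2) := by
      rw [← Real.exp_nat_mul]
      congr 1
      push_cast
      ring
    have hss : Real.log D.card ≤ ((s:ℝ) * s) := by
      have hxx : x * x = Real.log D.card := Real.mul_self_sqrt hlog0
      nlinarith
    have hle : Real.exp (-(((2*s*s:ℕ)):ℝ)/2) ≤ Real.exp (-(Real.log D.card)) := by
      apply Real.exp_le_exp.2
      have hcast : (((2*s*s:ℕ)):ℝ) = 2*(s:ℝ)*(s:ℝ) := by push_cast; ring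
      rw [hcast]
      nlinarith [hss]
    have hexplog : Real.exp (-(Real.log D.card)) = ((D.card:ℝ))⁻¹ := by
      rw [Real.exp_neg, Real.exp_log hd0]
    have hch : (r:ℝ) * (0.58:ℝ)^(2*s*s) ≤ (r:ℝ) * ((D.card:ℝ))⁻¹ := by
      apply mul_le_mul_of_nonneg_left _ hrpos
      rw [← hexplog]
      exact le_trans hpow1 (by rw [hpow2]; exact hle)
    have hrd : (r:ℝ) < (D.card:ℝ) := by nlinarith [mul_nonneg hrpos hx0]
    have hfin : (r:ℝ) * ((D.card:ℝ))⁻¹ < 1 := by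
      rw [← div_eq_mul_inv]
      exact (div_lt_one hd0).2 hrd
    exact lt_of_le_of_lt hch hfin
  exact greedy G D r s hs hdegD hjoinD h4 h5 h6

theorem lemma2 (G : SimpleGraph V) [DecidableRel G.Adj] (Ω : Finset V) (r : ℕ)
    (hdeg : ∀ x ∈ Ω, (Ω.card : ℝ)/2 - 3 ≤ ((Ω.filter (G.Adj x)).card : ℝ))
    (hbig : (10000000 : ℝ) ≤ (Ω.card : ℝ))
    (hr : (7500 : ℝ) * r * (Real.sqrt (Real.log Ω.card) + 1) ≤ (Ω.card : ℝ)) :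
    MyMinor G r := by
  classical
  have hu0 : (0:ℝ) < (Ω.card:ℝ) := by linarith
  have hrpos : (0:ℝ) ≤ (r:ℝ) := Nat.cast_nonneg r
  have hsq0 : (0:ℝ) ≤ Real.sqrt (Real.log Ω.card) := Real.sqrt_nonneg _
  by_cases hAB : ∃ A B : Finset V, A ⊆ Ω ∧ B ⊆ Ω ∧ Disjoint A B ∧
      ((0.4:ℝ) * Ω.card ≤ A.card) ∧ ((0.4:ℝ) * Ω.card ≤ B.card) ∧
      (∀ a ∈ A, ∀ b ∈ B, ¬ G.Adj a b)
  · obtain ⟨A, B, hAΩ, hBΩ, hABdisj, hAc, hBc, hanti⟩ := hAB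
    have hAu : (A.card : ℝ) ≤ (Ω.card:ℝ) := by exact_mod_cast Finset.card_le_card hAΩ
    -- degrees within A
    have hdegA : ∀ x ∈ A, (0.7 : ℝ) * A.card ≤ ((A.filter (G.Adj x)).card : ℝ) := by
      intro x hxA
      have hxΩ : x ∈ Ω := hAΩ hxA
      have hsub : Ω.filter (G.Adj x) ⊆ (A.filter (G.Adj x)) ∪ ((Ω \ A) \ B) := by
        intro z hz
        rw [Finset.mem_filter] at hz
        by_cases hzA : z ∈ A
        · exact Finset.mem_union_left _ (Finset.mem_filter.2 ⟨hzA, hz.2⟩)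
        · refine Finset.mem_union_right _ ?_
          rw [Finset.mem_sdiff, Finset.mem_sdiff]
          refine ⟨⟨hz.1, hzA⟩, fun hzB => hanti x hxA z hzB hz.2⟩
      have hcard1 : ((Ω.filter (G.Adj x)).card : ℝ)
          ≤ ((A.filter (G.Adj x)).card : ℝ) + (((Ω \ A) \ B).card : ℝ) := by
        have := (Finset.card_le_card hsub).trans (Finset.card_union_le _ _)
        exact_mod_cast this
      have hsdiff : (((Ω \ A) \ B).card : ℝ) ≤ (Ω.card:ℝ) - A.card - B.card := by
        have h1 : (Ω \ A) \ B = Ω \ (A ∪ B) := by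
          ext z; simp [Finset.mem_sdiff, Finset.mem_union]; tauto
        have h2 : A ∪ B ⊆ Ω := Finset.union_subset hAΩ hBΩ
        have h3 : (Ω \ (A ∪ B)).card = Ω.card - (A ∪ B).card := Finset.card_sdiff_of_subset h2
        have h4 : (A ∪ B).card = A.card + B.card := Finset.card_union_of_disjoint hABdisj
        have h5 : (A ∪ B).card ≤ Ω.card := Finset.card_le_card h2
        rw [h1, h3, h4]
        rw [h4] at h5
        push_cast [Nat.cast_sub h5]
        linarith
      have := hdeg x hxΩ
      nlinarith
    -- joinability within A
    have hjoinA : ∀ W : Finset V, W ⊆ A → (0.94 : ℝ) * A.card ≤ W.card →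
        ∀ x ∈ W, ∀ y ∈ W, x ≠ y → Joined3 G W x y := by
      intro W hWA hWc xx hx yy hy hne
      by_cases hadj : G.Adj xx yy
      · exact Or.inl hadj
      · have hWcard : (W.card : ℝ) ≤ (A.card:ℝ) := by exact_mod_cast Finset.card_le_card hWA
        have hfil : ∀ z ∈ A, ((A.filter (G.Adj z)).card : ℝ)
            ≤ ((W.filter (G.Adj z)).card : ℝ) + ((A.card:ℝ) - W.card) := by
          intro z hzA
          have hsub : A.filter (G.Adj z) ⊆ (W.filter (G.Adj z)) ∪ (A \ W) := by
            intro w hw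
            rw [Finset.mem_filter] at hw
            by_cases hwW : w ∈ W
            · exact Finset.mem_union_left _ (Finset.mem_filter.2 ⟨hwW, hw.2⟩)
            · exact Finset.mem_union_right _ (Finset.mem_sdiff.2 ⟨hw.1, hwW⟩)
          have h1 := (Finset.card_le_card hsub).trans (Finset.card_union_le _ _)
          have h2 : (A \ W).card = A.card - W.card := Finset.card_sdiff_of_subset hWA
          have h3 : W.card ≤ A.card := Finset.card_le_card hWA
          rw [h2] at h1
          have h4 : ((A.filter (G.Adj z)).card : ℝ)
              ≤ ((W.filter (G.Adj z)).card : ℝ) + ((A.card - W.card : ℕ) : ℝ) := by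
            exact_mod_cast h1
          rwa [Nat.cast_sub h3] at h4
        have hxA : xx ∈ A := hWA hx
        have hyA : yy ∈ A := hWA hy
        have h1 := hfil xx hxA
        have h2 := hfil yy hyA
        have h3 := hdegA xx hxA
        have h4 := hdegA yy hyA
        -- the two neighbourhoods inside W must intersect
        have hApos : (0:ℝ) < (A.card:ℝ) := by nlinarith
        have hint : ((W.filter (G.Adj xx)) ∩ (W.filter (G.Adj yy))).Nonempty := by
          by_contra hcon
          rw [Finset.not_nonempty_iff_eq_empty] at hcon
          have hun : ((W.filter (G.Adj xx)) ∪ (W.filter (G.Adj yy))).card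
              = (W.filter (G.Adj xx)).card + (W.filter (G.Adj yy)).card := by
            rw [Finset.card_union_of_disjoint (Finset.disjoint_iff_inter_eq_empty.2 hcon)]
          have hsubW : ((W.filter (G.Adj xx)) ∪ (W.filter (G.Adj yy))) ⊆ W :=
            Finset.union_subset (Finset.filter_subset _ _) (Finset.filter_subset _ _)
          have := Finset.card_le_card hsubW
          rw [hun] at this
          have hcast : ((W.filter (G.Adj xx)).card : ℝ) + ((W.filter (G.Adj yy)).card : ℝ)
              ≤ (W.card : ℝ) := by exact_mod_cast this
          nlinarith
        obtain ⟨p, hp⟩ := hint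
        rw [Finset.mem_inter, Finset.mem_filter, Finset.mem_filter] at hp
        exact Or.inr (Or.inl ⟨p, hp.1.1, hp.1.2, hp.2.2.symm⟩)
    have hA4 : (4000000 : ℝ) ≤ (A.card : ℝ) := by nlinarith
    have hApos : (0:ℝ) < (A.card:ℝ) := by linarith
    have hlogA : Real.sqrt (Real.log A.card) ≤ Real.sqrt (Real.log Ω.card) :=
      Real.sqrt_le_sqrt (Real.log_le_log (by linarith) hAu)
    have hdegA48 : ∀ x ∈ A, (0.48 : ℝ) * A.card ≤ ((A.filter (G.Adj x)).card : ℝ) := by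
      intro x hxA
      have h1 := hdegA x hxA
      have h2 : (0:ℝ) ≤ (A.card:ℝ) := Nat.cast_nonneg _
      nlinarith
    refine apply_greedy G A r hdegA48 hjoinA hA4 ?_
    calc (3000:ℝ) * r * (Real.sqrt (Real.log A.card) + 1)
        ≤ (3000:ℝ) * r * (Real.sqrt (Real.log Ω.card) + 1) := by nlinarith
      _ ≤ 0.4 * (Ω.card:ℝ) := by nlinarith
      _ ≤ (A.card:ℝ) := hAc
  · -- no anticomplete pair: Ω itself is joinable
    push_neg at hAB
    have hdegΩ : ∀ x ∈ Ω, (0.48 : ℝ) * Ω.card ≤ ((Ω.filter (G.Adj x)).card : ℝ) := by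
      intro x hx
      have := hdeg x hx
      nlinarith
    have hjoinΩ : ∀ W : Finset V, W ⊆ Ω → (0.94 : ℝ) * Ω.card ≤ W.card →
        ∀ x ∈ W, ∀ y ∈ W, x ≠ y → Joined3 G W x y := by
      intro W hWΩ hWc xx hx yy hy hne
      by_cases hadj : G.Adj xx yy
      · exact Or.inl hadj
      · have hWcard : (W.card : ℝ) ≤ (Ω.card:ℝ) := by exact_mod_cast Finset.card_le_card hWΩ
        have hfil : ∀ z ∈ Ω, ((Ω.filter (G.Adj z)).card : ℝ)
            ≤ ((W.filter (G.Adj z)).card : ℝ) + ((Ω.card:ℝ) - W.card) := by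
          intro z hzΩ
          have hsub : Ω.filter (G.Adj z) ⊆ (W.filter (G.Adj z)) ∪ (Ω \ W) := by
            intro w hw
            rw [Finset.mem_filter] at hw
            by_cases hwW : w ∈ W
            · exact Finset.mem_union_left _ (Finset.mem_filter.2 ⟨hwW, hw.2⟩)
            · exact Finset.mem_union_right _ (Finset.mem_sdiff.2 ⟨hw.1, hwW⟩)
          have h1 := (Finset.card_le_card hsub).trans (Finset.card_union_le _ _)
          have h2 : (Ω \ W).card = Ω.card - W.card := Finset.card_sdiff_of_subset hWΩ
          have h3 : W.card ≤ Ω.card := Finset.card_le_card hWΩ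
          rw [h2] at h1
          have h4 : ((Ω.filter (G.Adj z)).card : ℝ)
              ≤ ((W.filter (G.Adj z)).card : ℝ) + ((Ω.card - W.card : ℕ) : ℝ) := by
            exact_mod_cast h1
          rwa [Nat.cast_sub h3] at h4
        set A : Finset V := (W.filter (G.Adj xx)).erase yy with hAdef
        set B : Finset V := (W.filter (G.Adj yy)).erase xx with hBdef
        have hAcard : ((0.4:ℝ) * Ω.card) ≤ A.card := by
          have h1 := hfil xx (hWΩ hx)
          have h2 := hdeg xx (hWΩ hx)
          have h3 : ((W.filter (G.Adj xx)).card : ℝ) - 1 ≤ (A.card : ℝ) := by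
            rw [hAdef]
            have hme : (W.filter (G.Adj xx)).card - 1 ≤ ((W.filter (G.Adj xx)).erase yy).card :=
              Finset.pred_card_le_card_erase
            rcases Nat.eq_zero_or_pos (W.filter (G.Adj xx)).card with h0 | h0
            · have hnn : (0:ℝ) ≤ (((W.filter (G.Adj xx)).erase yy).card : ℝ) := Nat.cast_nonneg _
              rw [h0]
              push_cast
              linarith
            · have h5 : ((W.filter (G.Adj xx)).card - 1 : ℕ) = (W.filter (G.Adj xx)).card - 1 := rfl
              have h6 : (((W.filter (G.Adj xx)).card - 1 : ℕ) : ℝ)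
                  = ((W.filter (G.Adj xx)).card : ℝ) - 1 := by
                rw [Nat.cast_sub h0]
                norm_num
              calc ((W.filter (G.Adj xx)).card : ℝ) - 1
                  = (((W.filter (G.Adj xx)).card - 1 : ℕ) : ℝ) := h6.symm
                _ ≤ _ := by exact_mod_cast hme
          linarith only [h1, h2, h3, hWc, hWcard, hbig]
        have hBcard : ((0.4:ℝ) * Ω.card) ≤ B.card := by
          have h1 := hfil yy (hWΩ hy)
          have h2 := hdeg yy (hWΩ hy)
          have h3 : ((W.filter (G.Adj yy)).card : ℝ) - 1 ≤ (B.card : ℝ) := by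
            rw [hBdef]
            have hme : (W.filter (G.Adj yy)).card - 1 ≤ ((W.filter (G.Adj yy)).erase xx).card :=
              Finset.pred_card_le_card_erase
            rcases Nat.eq_zero_or_pos (W.filter (G.Adj yy)).card with h0 | h0
            · have hnn : (0:ℝ) ≤ (((W.filter (G.Adj yy)).erase xx).card : ℝ) := Nat.cast_nonneg _
              rw [h0]
              push_cast
              linarith
            · have h6 : (((W.filter (G.Adj yy)).card - 1 : ℕ) : ℝ)
                  = ((W.filter (G.Adj yy)).card : ℝ) - 1 := by
                rw [Nat.cast_sub h0]
                norm_num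
              calc ((W.filter (G.Adj yy)).card : ℝ) - 1
                  = (((W.filter (G.Adj yy)).card - 1 : ℕ) : ℝ) := h6.symm
                _ ≤ _ := by exact_mod_cast hme
          linarith only [h1, h2, h3, hWc, hWcard, hbig]
        by_cases hint : (A ∩ (W.filter (G.Adj yy))).Nonempty
        · obtain ⟨p, hp⟩ := hint
          rw [Finset.mem_inter] at hp
          have hp1 := hp.1
          rw [hAdef, Finset.mem_erase, Finset.mem_filter] at hp1
          have hp2 := hp.2
          rw [Finset.mem_filter] at hp2
          exact Or.inr (Or.inl ⟨p, hp1.2.1, hp1.2.2, hp2.2.symm⟩)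
        · have hdisj : Disjoint A B := by
            rw [Finset.disjoint_left]
            intro z hzA hzB
            apply hint
            refine ⟨z, Finset.mem_inter.2 ⟨hzA, ?_⟩⟩
            rw [hBdef, Finset.mem_erase] at hzB
            exact hzB.2
          have hAΩ : A ⊆ Ω := ((Finset.erase_subset _ _).trans (Finset.filter_subset _ _)).trans hWΩ
          have hBΩ : B ⊆ Ω := ((Finset.erase_subset _ _).trans (Finset.filter_subset _ _)).trans hWΩ
          obtain ⟨a, haA, b, hbB, hab⟩ := by
            have := hAB A B hAΩ hBΩ hdisj hAcard hBcard
            exact this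
          have haW : a ∈ W := by
            have := (Finset.erase_subset _ _) haA
            exact (Finset.filter_subset _ _) this
          have hbW : b ∈ W := by
            have := (Finset.erase_subset _ _) hbB
            exact (Finset.filter_subset _ _) this
          have haAdj : G.Adj xx a := by
            have := (Finset.erase_subset _ _) haA
            rw [Finset.mem_filter] at this
            exact this.2
          have hbAdj : G.Adj yy b := by
            have := (Finset.erase_subset _ _) hbB
            rw [Finset.mem_filter] at this
            exact this.2
          exact Or.inr (Or.inr ⟨a, haW, b, hbW, haAdj, hab, hbAdj.symm⟩)
    refine apply_greedy G Ω r hdegΩ hjoinΩ (by linarith) ?_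
    nlinarith [mul_nonneg hrpos hsq0, hr, hrpos, hsq0]
end Greedy





section Contract
variable {V : Type}

/-- Contract the edge `uv`: `v` becomes isolated, `u` takes over its edges. -/
def contractG (G : SimpleGraph V) (u v : V) : SimpleGraph V where
  Adj a b := a ≠ b ∧ a ≠ v ∧ b ≠ v ∧
    (G.Adj a b ∨ (a = u ∧ G.Adj v b) ∨ (b = u ∧ G.Adj a v))
  symm := by
    constructor
    intro a b ⟨h1, h2, h3, h4⟩
    refine ⟨h1.symm, h3, h2, ?_⟩
    rcases h4 with h | ⟨rfl, h⟩ | ⟨rfl, h⟩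
    · exact Or.inl h.symm
    · exact Or.inr (Or.inr ⟨rfl, h.symm⟩)
    · exact Or.inr (Or.inl ⟨rfl, h.symm⟩)
  loopless := ⟨fun a h => h.1 rfl⟩

lemma myMinor_mono {G G' : SimpleGraph V} (h : G ≤ G') {n : ℕ}
    (hm : MyMinor G n) : MyMinor G' n := by
  obtain ⟨f, hne, hconn, hdisj, hadj⟩ := hm
  refine ⟨f, hne, ?_, hdisj, ?_⟩
  · intro i
    obtain ⟨rt, hrt, hreach⟩ := hconn i
    refine ⟨rt, hrt, fun x hx => ?_⟩
    exact Relation.ReflTransGen.mono (fun a b hab => ⟨hab.1, hab.2.1, h hab.2.2⟩) _ _ (hreach x hx)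
  · intro i j hij
    obtain ⟨x, hx, y, hy, hxy⟩ := hadj i j hij
    exact ⟨x, hx, y, hy, h hxy⟩

lemma reachIn_ne_of_contract {G : SimpleGraph V} {u v : V} {B : Set V} {x y : V}
    (hr : ReachIn (contractG G u v) B x y) (hy : y ≠ v) : x = v → x = y := by
  intro hx
  subst hx
  rcases Relation.ReflTransGen.cases_head hr with h | ⟨c, hc, _⟩
  · exact h
  · exact absurd rfl hc.2.2.2.1

lemma contract_no_v {G : SimpleGraph V} {u v : V} {B : Set V} {x y : V}
    (hr : ReachIn (contractG G u v) B x y) (hyv : y = v) : x = v := by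
  induction hr with
  | refl => exact hyv
  | tail _ hbc ih =>
      subst hyv
      exact absurd rfl hbc.2.2.2.2.1

lemma myMinor_contract {G : SimpleGraph V} {u v : V} (huv : G.Adj u v) {n : ℕ}
    (hn : 2 ≤ n) (hm : MyMinor (contractG G u v) n) : MyMinor G n := by
  classical
  obtain ⟨f, hne, hconn, hdisj, hadj⟩ := hm
  -- v lies in no branch set
  have hvnot : ∀ i, v ∉ f i := by
    intro i hvi
    obtain ⟨rt, hrt, hreach⟩ := hconn i
    -- some vertex of f i has a contract-edge, hence is ≠ v
    have hex : ∃ j : Fin n, j ≠ i := by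
      by_cases h0 : i.1 = 0
      · refine ⟨⟨1, by omega⟩, fun hc => ?_⟩
        have : (1:ℕ) = i.1 := congrArg Fin.val hc
        omega
      · refine ⟨⟨0, by omega⟩, fun hc => ?_⟩
        have : (0:ℕ) = i.1 := congrArg Fin.val hc
        omega
    obtain ⟨j, hj⟩ := hex
    obtain ⟨x, hx, y, hy, hxy⟩ := hadj i j (Ne.symm hj)
    have hxv : x ≠ v := hxy.2.1
    by_cases hrtv : rt = v
    · have := contract_no_v (hreach x hx) hrtv
      exact hxv this
    · have := reachIn_ne_of_contract (hreach v hvi) hrtv rfl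
      exact hrtv this.symm
  set g : Fin n → Finset V := fun i => if u ∈ f i then insert v (f i) else f i with hgdef
  have hsub : ∀ i, f i ⊆ g i := by
    intro i z hz
    by_cases hu : u ∈ f i
    · simp only [hgdef, if_pos hu]
      exact Finset.mem_insert_of_mem hz
    · simp only [hgdef, if_neg hu]
      exact hz
  have hvmem : ∀ i, u ∈ f i → v ∈ g i := by
    intro i hu
    simp only [hgdef, if_pos hu]
    exact Finset.mem_insert_self v (f i)
  have hsubS : ∀ i {z : V}, z ∈ (f i : Set V) → z ∈ (g i : Set V) := by
    intro i z hz
    exact Finset.mem_coe.2 (hsub i (Finset.mem_coe.1 hz))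
  have hvmemS : ∀ i, u ∈ f i → v ∈ (g i : Set V) := by
    intro i hu
    exact Finset.mem_coe.2 (hvmem i hu)
  have hgmem : ∀ i z, z ∈ g i → z = v ∧ u ∈ f i ∨ z ∈ f i := by
    intro i z hz
    by_cases hu : u ∈ f i
    · simp only [hgdef, if_pos hu] at hz
      rcases Finset.mem_insert.1 hz with rfl | hz
      · exact Or.inl ⟨rfl, hu⟩
      · exact Or.inr hz
    · simp only [hgdef, if_neg hu] at hz
      exact Or.inr hz
  have hreachlift : ∀ i x y, x ∈ f i → ReachIn (contractG G u v) (f i : Set V) x y →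
      ReachIn G (g i : Set V) x y := by
    intro i x y hxfi hr
    induction hr with
    | refl => exact Relation.ReflTransGen.refl
    | tail hab hbc ih =>
        rename_i b c
        have hbfi : b ∈ (f i : Set V) := hbc.1
        have hcfi : c ∈ (f i : Set V) := hbc.2.1
        refine Relation.ReflTransGen.trans (ih) ?_
        obtain ⟨hne', hbv, hcv, hcase⟩ := hbc.2.2
        rcases hcase with h | ⟨rfl, h⟩ | ⟨rfl, h⟩
        · exact Relation.ReflTransGen.single ⟨hsubS i hbfi, hsubS i hcfi, h⟩
        · have hvg : v ∈ (g i : Set V) := hvmemS i (Finset.mem_coe.1 hbfi)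
          exact Relation.ReflTransGen.head ⟨hsubS i hbfi, hvg, huv⟩
            (Relation.ReflTransGen.single ⟨hvg, hsubS i hcfi, h⟩)
        · have hvg : v ∈ (g i : Set V) := hvmemS i (Finset.mem_coe.1 hcfi)
          exact Relation.ReflTransGen.head ⟨hsubS i hbfi, hvg, h⟩
            (Relation.ReflTransGen.single ⟨hvg, hsubS i hcfi, huv.symm⟩)
  refine ⟨g, ?_, ?_, ?_, ?_⟩
  · intro i
    exact (hne i).mono (hsub i)
  · intro i
    obtain ⟨rt, hrt, hreach⟩ := hconn i
    refine ⟨rt, hsub i hrt, ?_⟩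
    intro x hx
    rcases hgmem i x hx with ⟨rfl, hu⟩ | hx'
    · exact Relation.ReflTransGen.head ⟨hvmemS i hu, hsubS i (Finset.mem_coe.2 hu), huv.symm⟩
        (hreachlift i u rt hu (hreach u hu))
    · exact hreachlift i x rt hx' (hreach x hx')
  · intro i j hij
    rw [Finset.disjoint_left]
    intro z hzi hzj
    rcases hgmem i z hzi with ⟨rfl, hui⟩ | hzi'
    · rcases hgmem j z hzj with ⟨_, huj⟩ | hzj'
      · exact Finset.disjoint_left.1 (hdisj hij) hui huj
      · exact hvnot j hzj'
    · rcases hgmem j z hzj with ⟨rfl, _⟩ | hzj'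
      · exact hvnot i hzi'
      · exact Finset.disjoint_left.1 (hdisj hij) hzi' hzj'
  · intro i j hij
    obtain ⟨x, hx, y, hy, hxy⟩ := hadj i j hij
    obtain ⟨_, hxv, hyv, hcase⟩ := hxy
    rcases hcase with h | ⟨rfl, h⟩ | ⟨rfl, h⟩
    · exact ⟨x, hsub i hx, y, hsub j hy, h⟩
    · exact ⟨v, hvmem i hx, y, hsub j hy, h⟩
    · exact ⟨x, hsub i hx, v, hvmem j hy, h⟩

end Contract


section Counting
variable {V : Type} [Fintype V] [DecidableEq V]

lemma ecard_eq (G : SimpleGraph V) [DecidableRel G.Adj] :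
    Nat.card G.edgeSet = G.edgeFinset.card := by
  rw [SimpleGraph.edgeFinset_card, Nat.card_eq_fintype_card]

/-- support as a finset -/
def suppF (G : SimpleGraph V) [DecidableRel G.Adj] : Finset V :=
  Finset.univ.filter (fun v => (G.neighborFinset v).Nonempty)

lemma nsupp_eq (G : SimpleGraph V) [DecidableRel G.Adj] :
    G.support.ncard = (suppF G).card := by
  have h : G.support = ↑(suppF G) := by
    ext z
    simp [suppF, SimpleGraph.mem_support, Finset.Nonempty, SimpleGraph.mem_neighborFinset]
  rw [h, Set.ncard_coe_finset]

lemma support_mono {G G' : SimpleGraph V} (h : G ≤ G') : G.support ⊆ G'.support := by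
  intro z hz
  rw [SimpleGraph.mem_support] at hz ⊢
  obtain ⟨w, hw⟩ := hz
  exact ⟨w, h hw⟩

lemma nsupp_two (G : SimpleGraph V) (h : G.edgeSet.Nonempty) : 2 ≤ G.support.ncard := by
  obtain ⟨e, he⟩ := h
  induction e using Sym2.ind with
  | _ a b =>
    rw [SimpleGraph.mem_edgeSet] at he
    have hsub : ({a, b} : Set V) ⊆ G.support := by
      intro z hz
      rcases hz with rfl | hz
      · exact ⟨b, he⟩
      · rw [Set.mem_singleton_iff] at hz
        subst hz
        exact ⟨a, he.symm⟩
    calc 2 = ({a, b} : Set V).ncard := (Set.ncard_pair he.ne).symm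
      _ ≤ G.support.ncard := Set.ncard_le_ncard hsub (Set.toFinite _)

lemma edge_of_ecard_pos (G : SimpleGraph V) (h : 1 ≤ Nat.card G.edgeSet) :
    G.edgeSet.Nonempty := by
  rw [Nat.card_coe_set_eq] at h
  exact Set.nonempty_of_ncard_ne_zero (by omega)

lemma ecard_deleteEdges_singleton (G : SimpleGraph V) {e₀ : Sym2 V} (he : e₀ ∈ G.edgeSet) :
    Nat.card (G.deleteEdges {e₀}).edgeSet = Nat.card G.edgeSet - 1 := by
  rw [Nat.card_coe_set_eq, Nat.card_coe_set_eq, SimpleGraph.edgeSet_deleteEdges]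
  exact Set.ncard_diff_singleton_of_mem he

lemma incidence_ncard (G : SimpleGraph V) [DecidableRel G.Adj] (v : V) :
    (G.incidenceSet v).ncard = G.degree v := by
  rw [← Nat.card_coe_set_eq, Nat.card_eq_fintype_card]
  exact SimpleGraph.card_incidenceSet_eq_degree G v

lemma ecard_deleteIncidence (G : SimpleGraph V) [DecidableRel G.Adj] (v : V) :
    Nat.card (G.deleteEdges (G.incidenceSet v)).edgeSet = Nat.card G.edgeSet - G.degree v := by
  rw [Nat.card_coe_set_eq, Nat.card_coe_set_eq, SimpleGraph.edgeSet_deleteEdges]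
  rw [Set.ncard_diff (G.incidenceSet_subset v) (Set.toFinite _), incidence_ncard]

lemma degree_le_ecard (G : SimpleGraph V) [DecidableRel G.Adj] (v : V) :
    G.degree v ≤ Nat.card G.edgeSet := by
  rw [Nat.card_coe_set_eq, ← incidence_ncard G v]
  exact Set.ncard_le_ncard (G.incidenceSet_subset v) (Set.toFinite _)

lemma support_deleteIncidence_subset (G : SimpleGraph V) (v : V) :
    (G.deleteEdges (G.incidenceSet v)).support ⊆ G.support \ {v} := by
  intro z hz
  rw [SimpleGraph.mem_support] at hz
  obtain ⟨w, hw⟩ := hz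
  rw [SimpleGraph.deleteEdges_adj] at hw
  refine ⟨⟨w, hw.1⟩, ?_⟩
  intro hzv
  rw [Set.mem_singleton_iff] at hzv
  subst hzv
  exact hw.2 ((G.mem_incidenceSet z w).2 hw.1)

lemma support_contract_subset (G : SimpleGraph V) {u v : V} (huv : G.Adj u v) :
    (contractG G u v).support ⊆ G.support \ {v} := by
  intro z hz
  rw [SimpleGraph.mem_support] at hz
  obtain ⟨w, hw⟩ := hz
  obtain ⟨hne, hzv, hwv, hcase⟩ := hw
  refine ⟨?_, hzv⟩
  rcases hcase with h | ⟨rfl, h⟩ | ⟨rfl, h⟩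
  · exact ⟨w, h⟩
  · exact ⟨v, huv⟩
  · exact ⟨v, h⟩

lemma v_mem_support (G : SimpleGraph V) {u v : V} (huv : G.Adj u v) : v ∈ G.support :=
  ⟨u, huv.symm⟩

lemma sum_deg_supp (G : SimpleGraph V) [DecidableRel G.Adj] :
    ∑ v ∈ suppF G, G.degree v = 2 * G.edgeFinset.card := by
  have hzero : ∀ x ∈ Finset.univ, x ∉ suppF G → G.degree x = 0 := by
    intro x _ hx
    rw [suppF, Finset.mem_filter] at hx
    push_neg at hx
    have hemp : G.neighborFinset x = ∅ := by
      rw [← Finset.not_nonempty_iff_eq_empty]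
      intro hne
      exact (Finset.nonempty_iff_ne_empty.1 hne) (hx (Finset.mem_univ x))
    have hd : G.degree x = (G.neighborFinset x).card := rfl
    rw [hd, hemp]
    rfl
  have hsum := Finset.sum_subset (Finset.subset_univ (suppF G)) hzero
  rw [hsum, SimpleGraph.sum_degrees_eq_twice_card_edges]

lemma deg_pos_of_suppF (G : SimpleGraph V) [DecidableRel G.Adj] {v : V} (hv : v ∈ suppF G) :
    1 ≤ G.degree v := by
  rw [suppF, Finset.mem_filter] at hv
  have : 0 < (G.neighborFinset v).card := Finset.card_pos.2 hv.2
  exact this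

lemma contract_ecard_lower (G : SimpleGraph V) [DecidableRel G.Adj] {u v : V} (huv : G.Adj u v) :
    (Nat.card G.edgeSet : ℝ) ≤ (Nat.card (contractG G u v).edgeSet : ℝ) + 1
      + ((G.neighborFinset u ∩ G.neighborFinset v).card : ℝ) := by
  classical
  set G' := contractG G u v with hG'def
  letI : DecidableRel G'.Adj := Classical.decRel _
  rw [ecard_eq, ecard_eq]
  set F1 : Finset (Sym2 V) := G.edgeFinset.filter (fun e => ¬ v ∈ e) with hF1
  set Fv : Finset (Sym2 V) := G.edgeFinset.filter (fun e => v ∈ e) with hFv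
  have hF1card : F1.card + G.degree v = G.edgeFinset.card := by
    have h1 : Fv.card + F1.card = G.edgeFinset.card :=
      Finset.card_filter_add_card_filter_not (fun e => v ∈ e)
    have h2 : Fv = G.incidenceFinset v := (SimpleGraph.incidenceFinset_eq_filter G v).symm
    have h3 : Fv.card = G.degree v := by rw [h2]; exact SimpleGraph.card_incidenceFinset_eq_degree G v
    omega
  set F2 : Finset (Sym2 V) :=
    (G.neighborFinset v \ insert u (G.neighborFinset u)).image (fun a => s(a, u)) with hF2
  have hF1sub : F1 ⊆ G'.edgeFinset := by
    intro e
    induction e using Sym2.ind with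
    | _ a b =>
      intro he
      rw [hF1, Finset.mem_filter, SimpleGraph.mem_edgeFinset, SimpleGraph.mem_edgeSet] at he
      obtain ⟨hadj, hv⟩ := he
      rw [Sym2.mem_iff] at hv
      push_neg at hv
      rw [SimpleGraph.mem_edgeFinset, SimpleGraph.mem_edgeSet]
      exact ⟨hadj.ne, fun h => hv.1 h.symm, fun h => hv.2 h.symm, Or.inl hadj⟩
  have hF2sub : F2 ⊆ G'.edgeFinset := by
    intro e he
    rw [hF2, Finset.mem_image] at he
    obtain ⟨a, ha, rfl⟩ := he
    rw [Finset.mem_sdiff, SimpleGraph.mem_neighborFinset] at ha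
    obtain ⟨hav, hnotins⟩ := ha
    rw [Finset.mem_insert, SimpleGraph.mem_neighborFinset] at hnotins
    push_neg at hnotins
    rw [SimpleGraph.mem_edgeFinset, SimpleGraph.mem_edgeSet]
    exact ⟨hnotins.1, hav.ne', huv.ne, Or.inr (Or.inr ⟨rfl, hav.symm⟩)⟩
  have hF2card : F2.card = (G.neighborFinset v \ insert u (G.neighborFinset u)).card := by
    rw [hF2]
    apply Finset.card_image_of_injOn
    intro a ha a' ha' heq
    rw [Finset.mem_coe, Finset.mem_sdiff, Finset.mem_insert] at ha ha'
    rw [Sym2.eq_iff] at heq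
    rcases heq with ⟨h1, _⟩ | ⟨h1, h2⟩
    · exact h1
    · exfalso
      push_neg at ha
      exact ha.2.1 h1
  have hF2big : (G.degree v : ℝ) ≤ (F2.card : ℝ) + 1
      + ((G.neighborFinset u ∩ G.neighborFinset v).card : ℝ) := by
    have hsub : G.neighborFinset v ⊆ (G.neighborFinset v \ insert u (G.neighborFinset u))
        ∪ insert u (G.neighborFinset u ∩ G.neighborFinset v) := by
      intro z hz
      by_cases hzin : z ∈ insert u (G.neighborFinset u)
      · refine Finset.mem_union_right _ ?_
        rw [Finset.mem_insert] at hzin ⊢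
        rcases hzin with rfl | hzin
        · exact Or.inl rfl
        · exact Or.inr (Finset.mem_inter.2 ⟨hzin, hz⟩)
      · exact Finset.mem_union_left _ (Finset.mem_sdiff.2 ⟨hz, hzin⟩)
    have h1 : G.degree v ≤ (G.neighborFinset v \ insert u (G.neighborFinset u)).card
        + (insert u (G.neighborFinset u ∩ G.neighborFinset v)).card :=
      (Finset.card_le_card hsub).trans (Finset.card_union_le _ _)
    have h2 : (insert u (G.neighborFinset u ∩ G.neighborFinset v)).card
        ≤ (G.neighborFinset u ∩ G.neighborFinset v).card + 1 := Finset.card_insert_le _ _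
    rw [← hF2card] at h1
    have h4 : G.degree v ≤ F2.card + ((G.neighborFinset u ∩ G.neighborFinset v).card + 1) := by
      omega
    have h5 := (Nat.cast_le (α := ℝ)).2 h4
    push_cast at h5
    linarith
  have hdisj : Disjoint F1 F2 := by
    rw [Finset.disjoint_left]
    intro e he1 he2
    rw [hF2, Finset.mem_image] at he2
    obtain ⟨a, ha, rfl⟩ := he2
    rw [hF1, Finset.mem_filter, SimpleGraph.mem_edgeFinset, SimpleGraph.mem_edgeSet] at he1
    rw [Finset.mem_sdiff, Finset.mem_insert, SimpleGraph.mem_neighborFinset] at ha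
    push_neg at ha
    exact ha.2.2 ((SimpleGraph.mem_neighborFinset G u a).2 he1.1.symm)
  have hunion : F1.card + F2.card ≤ G'.edgeFinset.card := by
    rw [← Finset.card_union_of_disjoint hdisj]
    exact Finset.card_le_card (Finset.union_subset hF1sub hF2sub)
  have hc1 : (F1.card : ℝ) + (G.degree v : ℝ) = (G.edgeFinset.card : ℝ) := by
    exact_mod_cast hF1card
  have hc2 : (F1.card : ℝ) + (F2.card : ℝ) ≤ (G'.edgeFinset.card : ℝ) := by
    exact_mod_cast hunion
  linarith

lemma contract_ecard_upper (G : SimpleGraph V) [DecidableRel G.Adj] (u v : V) :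
    Nat.card (contractG G u v).edgeSet ≤ Nat.card G.edgeSet := by
  classical
  set G' := contractG G u v with hG'def
  letI : DecidableRel G'.Adj := Classical.decRel _
  rw [ecard_eq, ecard_eq]
  set F1 : Finset (Sym2 V) := G.edgeFinset.filter (fun e => ¬ v ∈ e) with hF1
  set F2' : Finset (Sym2 V) := (G.neighborFinset v).image (fun a => s(a, u)) with hF2'
  have hsub : G'.edgeFinset ⊆ F1 ∪ F2' := by
    intro e
    induction e using Sym2.ind with
    | _ a b =>
      intro he
      rw [SimpleGraph.mem_edgeFinset, SimpleGraph.mem_edgeSet] at he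
      obtain ⟨hne, hav, hbv, hcase⟩ := he
      rcases hcase with h | ⟨rfl, h⟩ | ⟨rfl, h⟩
      · refine Finset.mem_union_left _ ?_
        rw [hF1, Finset.mem_filter, SimpleGraph.mem_edgeFinset, SimpleGraph.mem_edgeSet]
        refine ⟨h, ?_⟩
        rw [Sym2.mem_iff]
        push_neg
        exact ⟨fun hc => hav hc.symm, fun hc => hbv hc.symm⟩
      · refine Finset.mem_union_right _ ?_
        rw [hF2', Finset.mem_image]
        exact ⟨b, (SimpleGraph.mem_neighborFinset G v b).2 h, Sym2.eq_swap⟩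
      · refine Finset.mem_union_right _ ?_
        rw [hF2', Finset.mem_image]
        exact ⟨a, (SimpleGraph.mem_neighborFinset G v a).2 h.symm, rfl⟩
  have h1 : G'.edgeFinset.card ≤ F1.card + F2'.card :=
    (Finset.card_le_card hsub).trans (Finset.card_union_le _ _)
  have h2 : F2'.card ≤ G.degree v := by
    rw [hF2']
    exact (Finset.card_image_le).trans (le_refl _)
  have h3 : F1.card + G.degree v = G.edgeFinset.card := by
    have ha : (G.edgeFinset.filter (fun e => v ∈ e)).card + F1.card = G.edgeFinset.card :=
      Finset.card_filter_add_card_filter_not (fun e => v ∈ e)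
    have hb : (G.edgeFinset.filter (fun e => v ∈ e)) = G.incidenceFinset v :=
      (SimpleGraph.incidenceFinset_eq_filter G v).symm
    have hc : (G.edgeFinset.filter (fun e => v ∈ e)).card = G.degree v := by
      rw [hb]; exact SimpleGraph.card_incidenceFinset_eq_degree G v
    omega
  omega

end Counting


section Main
variable {V : Type} [Fintype V] [DecidableEq V]

lemma sqrtlog_ge_one {t : ℕ} (ht : 2 ≤ t) : 1 ≤ Real.sqrt (Real.log ((t:ℝ)+1)) := by
  have ht3 : (3:ℝ) ≤ (t:ℝ)+1 := by
    have : (2:ℝ) ≤ (t:ℝ) := by exact_mod_cast ht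
    linarith
  have hlog : 1 ≤ Real.log ((t:ℝ)+1) := by
    have he : Real.exp 1 ≤ 3 := by nlinarith [Real.exp_one_lt_d9]
    calc (1:ℝ) = Real.log (Real.exp 1) := (Real.log_exp 1).symm
      _ ≤ Real.log ((t:ℝ)+1) := Real.log_le_log (Real.exp_pos 1) (by linarith)
  calc (1:ℝ) = Real.sqrt 1 := Real.sqrt_one.symm
    _ ≤ _ := Real.sqrt_le_sqrt hlog

lemma log_3e7_le : Real.log (30000000:ℝ) ≤ 18 := by
  rw [Real.log_le_iff_le_exp (by norm_num)]
  have h1 : ((2.71:ℝ))^(18:ℕ) ≤ (Real.exp 1)^(18:ℕ) := by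
    apply pow_le_pow_left₀ (by norm_num)
    nlinarith [Real.exp_one_gt_d9]
  have h2 : (Real.exp 1)^(18:ℕ) = Real.exp (18:ℕ) := Real.exp_one_pow 18
  have h3 : (30000000:ℝ) ≤ ((2.71:ℝ))^(18:ℕ) := by norm_num
  have h4 : Real.exp ((18:ℕ):ℝ) = Real.exp (18:ℝ) := by norm_num
  calc (30000000:ℝ) ≤ ((2.71:ℝ))^(18:ℕ) := h3
    _ ≤ (Real.exp 1)^(18:ℕ) := h1
    _ = Real.exp ((18:ℕ):ℝ) := h2
    _ = Real.exp 18 := h4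

lemma omega_arith {t : ℕ} (ht : 2 ≤ t) {u k : ℝ}
    (hk : k = 10000000 * ((t:ℝ)+1) * Real.sqrt (Real.log ((t:ℝ)+1)))
    (hku : k ≤ u) (huk : u ≤ 2*k + 2) :
    (7500:ℝ) * ((t:ℝ)+1) * (Real.sqrt (Real.log u) + 1) ≤ u ∧ (10000000:ℝ) ≤ u := by
  have ht3 : (3:ℝ) ≤ (t:ℝ)+1 := by
    have : (2:ℝ) ≤ (t:ℝ) := by exact_mod_cast ht
    linarith
  set sL : ℝ := Real.sqrt (Real.log ((t:ℝ)+1)) with hsL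
  have hsL1 : 1 ≤ sL := sqrtlog_ge_one ht
  set L : ℝ := Real.log ((t:ℝ)+1) with hL
  have hL1 : 1 ≤ L := by
    have := Real.sq_sqrt (Real.log_nonneg (by linarith) : (0:ℝ) ≤ Real.log ((t:ℝ)+1))
    nlinarith [Real.sqrt_nonneg (Real.log ((t:ℝ)+1))]
  have hsLL : sL ≤ L := by
    have h1 : sL * sL = L := Real.mul_self_sqrt (by linarith)
    nlinarith
  have hk3e7 : (30000000:ℝ) ≤ k := by rw [hk]; nlinarith
  have hu3e7 : (30000000:ℝ) ≤ u := le_trans hk3e7 hku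
  have hupos : (0:ℝ) < u := by linarith
  have hu3k : u ≤ 3*k := by linarith
  -- bound log u
  have hlogu : Real.log u ≤ 20 * L := by
    have h3k : (3:ℝ)*k = 30000000 * (((t:ℝ)+1) * sL) := by rw [hk]; ring
    have hlog1 : Real.log u ≤ Real.log (3*k) := Real.log_le_log hupos hu3k
    have htsLpos : (0:ℝ) < ((t:ℝ)+1) * sL := by nlinarith
    have hlog2 : Real.log (3*k) = Real.log (30000000:ℝ) + Real.log (((t:ℝ)+1) * sL) := by
      rw [h3k, Real.log_mul (by norm_num) (ne_of_gt htsLpos)]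
    have hlog3 : Real.log (((t:ℝ)+1) * sL) = Real.log ((t:ℝ)+1) + Real.log sL := by
      rw [Real.log_mul (by linarith) (by linarith)]
    have hlogsL : Real.log sL ≤ L := by
      have := Real.log_le_sub_one_of_pos (by linarith : (0:ℝ) < sL)
      linarith
    have h18 : Real.log (30000000:ℝ) ≤ 18 := log_3e7_le
    have h18L : (18:ℝ) ≤ 18 * L := by nlinarith
    rw [hlog2, hlog3] at hlog1
    calc Real.log u ≤ Real.log (30000000:ℝ) + (Real.log ((t:ℝ)+1) + Real.log sL) := hlog1
      _ ≤ 18 * L + (L + L) := by rw [← hL]; linarith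
      _ = 20 * L := by ring
  have hsqrtu : Real.sqrt (Real.log u) ≤ 4.5 * sL := by
    have h1 : Real.sqrt (Real.log u) ≤ Real.sqrt (20 * L) := Real.sqrt_le_sqrt hlogu
    have h2 : Real.sqrt (20 * L) = Real.sqrt 20 * Real.sqrt L := Real.sqrt_mul (by norm_num) L
    have h3 : Real.sqrt 20 ≤ 4.5 := by
      have := Real.sqrt_le_sqrt (by norm_num : (20:ℝ) ≤ 4.5^2)
      rwa [Real.sqrt_sq (by norm_num : (0:ℝ) ≤ 4.5)] at this
    have h4 : Real.sqrt L = sL := rfl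
    have h5 : (0:ℝ) ≤ Real.sqrt L := Real.sqrt_nonneg _
    rw [h2, h4] at h1
    nlinarith
  constructor
  · have hstep : Real.sqrt (Real.log u) + 1 ≤ 5.5 * sL := by linarith
    have h1 : (7500:ℝ) * ((t:ℝ)+1) * (Real.sqrt (Real.log u) + 1)
        ≤ 7500 * ((t:ℝ)+1) * (5.5 * sL) := by nlinarith [Real.sqrt_nonneg (Real.log u)]
    have h2 : (7500:ℝ) * ((t:ℝ)+1) * (5.5 * sL) ≤ k := by rw [hk]; nlinarith
    linarith
  · linarith

lemma mem_suppF_iff (G : SimpleGraph V) [DecidableRel G.Adj] {v : V} :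
    v ∈ suppF G ↔ v ∈ G.support := by
  simp [suppF, SimpleGraph.mem_support, Finset.Nonempty, SimpleGraph.mem_neighborFinset]

theorem aux {t : ℕ} (ht : 2 ≤ t) :
    ∀ M : ℕ, ∀ G : SimpleGraph V,
      Nat.card G.edgeSet + G.support.ncard ≤ M →
      1 ≤ G.support.ncard →
      10000000 * ((t:ℝ)+1) * Real.sqrt (Real.log ((t:ℝ)+1)) * (G.support.ncard : ℝ)
        ≤ (Nat.card G.edgeSet : ℝ) →
      MyMinor G (t+1) := by
  intro M
  induction M with
  | zero =>
      intro G hM hns _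
      omega
  | succ M ihM =>
    intro G hM hns hKe
    classical
    letI : DecidableRel G.Adj := Classical.decRel _
    have ht3 : (3:ℝ) ≤ (t:ℝ)+1 := by
      have : (2:ℝ) ≤ (t:ℝ) := by exact_mod_cast ht
      linarith
    have hsL1 : 1 ≤ Real.sqrt (Real.log ((t:ℝ)+1)) := sqrtlog_ge_one ht
    set k : ℝ := 10000000 * ((t:ℝ)+1) * Real.sqrt (Real.log ((t:ℝ)+1)) with hkdef
    have hk3e7 : (30000000:ℝ) ≤ k := by rw [hkdef]; nlinarith
    have hn1 : (1:ℝ) ≤ (G.support.ncard : ℝ) := by exact_mod_cast hns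
    have hnn : (0:ℝ) ≤ (G.support.ncard : ℝ) := by linarith
    have he1 : 1 ≤ Nat.card G.edgeSet := by
      have h1 : (1:ℝ) ≤ (Nat.card G.edgeSet : ℝ) := by nlinarith
      exact_mod_cast h1
    have hn2' : 2 ≤ G.support.ncard := nsupp_two G (edge_of_ecard_pos G he1)
    have hn2R : (2:ℝ) ≤ (G.support.ncard : ℝ) := by exact_mod_cast hn2'
    by_cases h1 : k * (G.support.ncard : ℝ) + 1 ≤ (Nat.card G.edgeSet : ℝ)
    · -- delete an arbitrary edge
      obtain ⟨ε, hε⟩ := edge_of_ecard_pos G he1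
      have he2 : Nat.card (G.deleteEdges {ε}).edgeSet = Nat.card G.edgeSet - 1 :=
        ecard_deleteEdges_singleton G hε
      have hle : G.deleteEdges {ε} ≤ G := SimpleGraph.deleteEdges_le _
      have hn2 : (G.deleteEdges {ε}).support.ncard ≤ G.support.ncard :=
        Set.ncard_le_ncard (support_mono hle) (Set.toFinite _)
      have he2' : 1 ≤ Nat.card (G.deleteEdges {ε}).edgeSet := by
        rw [he2]
        have ha : (2:ℝ) ≤ (Nat.card G.edgeSet : ℝ) := by nlinarith
        have hb : 2 ≤ Nat.card G.edgeSet := by exact_mod_cast ha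
        omega
      have hns2 : 1 ≤ (G.deleteEdges {ε}).support.ncard := by
        have := nsupp_two _ (edge_of_ecard_pos _ he2')
        omega
      refine myMinor_mono hle (ihM (G.deleteEdges {ε}) (by rw [he2]; omega) hns2 ?_)
      rw [he2, Nat.cast_sub he1]
      push_cast
      have hmono : (((G.deleteEdges {ε}).support.ncard : ℕ):ℝ) ≤ (G.support.ncard : ℝ) := by
        exact_mod_cast hn2
      nlinarith
    · push_neg at h1
      by_cases h2 : ∃ v ∈ suppF G, (G.degree v : ℝ) < k
      · -- delete a low-degree vertex
        obtain ⟨v, hvS, hvdeg⟩ := h2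
        have hvsupp : v ∈ G.support := (mem_suppF_iff G).1 hvS
        have hdegpos : 1 ≤ G.degree v := deg_pos_of_suppF G hvS
        set G2 := G.deleteEdges (G.incidenceSet v) with hG2
        have he2 : Nat.card G2.edgeSet = Nat.card G.edgeSet - G.degree v :=
          ecard_deleteIncidence G v
        have hdegle : G.degree v ≤ Nat.card G.edgeSet := degree_le_ecard G v
        have hle : G2 ≤ G := SimpleGraph.deleteEdges_le _
        have hsupp2 : G2.support ⊆ G.support \ {v} := support_deleteIncidence_subset G v
        have hn2 : G2.support.ncard ≤ G.support.ncard - 1 := by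
          calc G2.support.ncard ≤ (G.support \ {v}).ncard :=
              Set.ncard_le_ncard hsupp2 (Set.toFinite _)
            _ = G.support.ncard - 1 := Set.ncard_diff_singleton_of_mem hvsupp
        have hcast : ((Nat.card G.edgeSet - G.degree v : ℕ):ℝ)
            = (Nat.card G.edgeSet : ℝ) - (G.degree v : ℝ) := by
          rw [Nat.cast_sub hdegle]
        have hthresh : k * ((G.support.ncard : ℝ) - 1) < (Nat.card G2.edgeSet : ℝ) := by
          rw [he2, hcast]
          nlinarith
        have he2' : 1 ≤ Nat.card G2.edgeSet := by
          have ha : (1:ℝ) ≤ (Nat.card G2.edgeSet : ℝ) := by nlinarith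
          exact_mod_cast ha
        have hns2 : 1 ≤ G2.support.ncard := by
          have := nsupp_two _ (edge_of_ecard_pos _ he2')
          omega
        refine myMinor_mono hle (ihM G2 ?_ hns2 ?_)
        · rw [he2]
          omega
        · have hcastn : ((G2.support.ncard : ℕ):ℝ) ≤ (G.support.ncard : ℝ) - 1 := by
            have h := hn2
            have : ((G2.support.ncard : ℕ):ℝ) ≤ ((G.support.ncard - 1 : ℕ):ℝ) := by
              exact_mod_cast h
            rw [Nat.cast_sub hns] at this
            push_cast at this
            exact this
          nlinarith [hthresh]
      · push_neg at h2
        by_cases h3 : ∃ a b, G.Adj a b ∧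
            ((G.neighborFinset a ∩ G.neighborFinset b).card : ℝ)
              ≤ k - 2
        · -- contract an edge in few triangles
          obtain ⟨a, b, hab, hcom⟩ := h3
          set G2 := contractG G a b with hG2
          have hlow := contract_ecard_lower G hab
          have hupp := contract_ecard_upper G a b
          have hbsupp : b ∈ G.support := v_mem_support G hab
          have hsupp2 : G2.support ⊆ G.support \ {b} := support_contract_subset G hab
          have hn2 : G2.support.ncard ≤ G.support.ncard - 1 := by
            calc G2.support.ncard ≤ (G.support \ {b}).ncard :=
                Set.ncard_le_ncard hsupp2 (Set.toFinite _)
              _ = G.support.ncard - 1 := Set.ncard_diff_singleton_of_mem hbsupp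
          have hthresh : k * ((G.support.ncard : ℝ) - 1) + 1 ≤ (Nat.card G2.edgeSet : ℝ) := by
            rw [← hG2] at hlow
            nlinarith
          have he2' : 1 ≤ Nat.card G2.edgeSet := by
            have ha : (1:ℝ) ≤ (Nat.card G2.edgeSet : ℝ) := by nlinarith
            exact_mod_cast ha
          have hns2 : 1 ≤ G2.support.ncard := by
            have := nsupp_two _ (edge_of_ecard_pos _ he2')
            omega
          refine myMinor_contract hab (by omega) (ihM G2 ?_ hns2 ?_)
          · have : Nat.card G2.edgeSet ≤ Nat.card G.edgeSet := hupp
            omega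
          · have hcastn : ((G2.support.ncard : ℕ):ℝ) ≤ (G.support.ncard : ℝ) - 1 := by
              have : ((G2.support.ncard : ℕ):ℝ) ≤ ((G.support.ncard - 1 : ℕ):ℝ) := by
                exact_mod_cast hn2
              rw [Nat.cast_sub hns] at this
              push_cast at this
              exact this
            nlinarith [hthresh]
        · push_neg at h3
          -- final case: apply the dense-neighbourhood argument
          have hSFne : (suppF G).Nonempty := by
            rw [← Finset.card_pos, ← nsupp_eq]
            omega
          obtain ⟨v, hvS, hvmin⟩ := Finset.exists_min_image (suppF G) (fun v => G.degree v) hSFne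
          have hsum : (suppF G).card * G.degree v ≤ 2 * Nat.card G.edgeSet := by
            rw [ecard_eq]
            calc (suppF G).card * G.degree v = (suppF G).card • G.degree v := by
                  rw [smul_eq_mul]
              _ ≤ ∑ w ∈ suppF G, G.degree w := Finset.card_nsmul_le_sum _ _ _ hvmin
              _ = 2 * G.edgeFinset.card := sum_deg_supp G
          have hcardn : (suppF G).card = G.support.ncard := (nsupp_eq G).symm
          have hsumR : (G.support.ncard : ℝ) * (G.degree v : ℝ)
              ≤ 2 * (Nat.card G.edgeSet : ℝ) := by
            rw [← hcardn]
            exact_mod_cast hsum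
          have hdeg2k : (G.degree v : ℝ) ≤ 2*k + 2 := by nlinarith
          have hdegk : k ≤ (G.degree v : ℝ) := h2 v hvS
          have hΩcard : (G.neighborFinset v).card = G.degree v := rfl
          have hmindeg : ∀ x ∈ G.neighborFinset v,
              ((G.neighborFinset v).card : ℝ)/2 - 3
                ≤ (((G.neighborFinset v).filter (G.Adj x)).card : ℝ) := by
            intro x hx
            have hadjvx : G.Adj v x := (G.mem_neighborFinset v x).1 hx
            have hcom := h3 x v hadjvx.symm
            have hfeq : (G.neighborFinset v).filter (G.Adj x)
                = G.neighborFinset x ∩ G.neighborFinset v := by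
              ext z
              simp only [Finset.mem_filter, Finset.mem_inter, SimpleGraph.mem_neighborFinset]
              tauto
            rw [hfeq, hΩcard]
            nlinarith
          have harith := omega_arith ht hkdef hdegk (by linarith : (G.degree v:ℝ) ≤ 2*k+2)
          refine lemma2 G (G.neighborFinset v) (t+1) hmindeg ?_ ?_
          · rw [hΩcard]
            exact harith.2
          · rw [hΩcard]
            have h := harith.1
            have hc : ((t+1 : ℕ):ℝ) = (t:ℝ)+1 := by push_cast; ring
            rw [hc]
            exact h
  
end Main


section Final
variable {V : Type}

lemma reachIn_induce {G : SimpleGraph V} {B : Set V} {x y : V}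
    (hr : ReachIn G B x y) (hx : x ∈ B) (hy : y ∈ B) :
    (G.induce B).Reachable ⟨x, hx⟩ ⟨y, hy⟩ := by
  induction hr using Relation.ReflTransGen.head_induction_on with
  | refl => rfl
  | head h' _ ih =>
      obtain ⟨ha, hc, hadj⟩ := h'
      exact (SimpleGraph.Adj.reachable (by simpa using hadj)).trans (ih hc)

theorem MyMinor.hasCompleteMinor {G : SimpleGraph V} {n : ℕ} (h : MyMinor G n) :
    HasCompleteMinor G n := by
  obtain ⟨f, hne, hconn, hdisj, hadj⟩ := h
  refine ⟨fun i => (f i : Set V), fun i => by exact_mod_cast (hne i), ?_, ?_, ?_⟩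
  · intro i
    obtain ⟨rt, hrt, hreach⟩ := hconn i
    have hnonempty : Nonempty ((f i : Set V) : Type _) := by
      obtain ⟨x, hx⟩ := hne i
      exact ⟨⟨x, by exact_mod_cast hx⟩⟩
    refine ⟨?_⟩
    intro a b
    have ha := (reachIn_induce (hreach a a.2) a.2 (by exact_mod_cast hrt))
    have hb := (reachIn_induce (hreach b b.2) b.2 (by exact_mod_cast hrt))
    exact ha.trans hb.symm
  · intro i j hij
    exact Finset.disjoint_coe.2 (hdisj hij)
  · intro i j hij
    obtain ⟨x, hx, y, hy, hxy⟩ := hadj i j hij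
    exact ⟨x, by exact_mod_cast hx, y, by exact_mod_cast hy, hxy⟩

lemma singleton_connected (G : SimpleGraph V) (v : V) :
    (G.induce ({v} : Set V)).Connected := by
  rw [SimpleGraph.connected_iff]
  refine ⟨fun a b => ?_, ⟨⟨v, rfl⟩⟩⟩
  have hab : a = b := by
    apply Subtype.ext
    have ha := a.2
    have hb := b.2
    simp only [Set.mem_singleton_iff] at ha hb
    rw [ha, hb]
  rw [hab]

lemma minor_one_of_vertex (G : SimpleGraph V) (v : V) : HasCompleteMinor G 1 := by
  refine ⟨fun _ => ({v} : Set V), fun _ => ⟨v, rfl⟩, fun _ => singleton_connected G v, ?_, ?_⟩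
  · intro i j hij
    exact absurd (Subsingleton.elim i j) hij
  · intro i j hij
    exact absurd (Subsingleton.elim i j) hij

lemma minor_two_of_edge (G : SimpleGraph V) {x y : V} (hxy : G.Adj x y) :
    HasCompleteMinor G 2 := by
  refine ⟨fun i => if i = 0 then ({x} : Set V) else ({y} : Set V), ?_, ?_, ?_, ?_⟩
  · intro i
    dsimp only
    by_cases h : i = 0
    · rw [if_pos h]; exact ⟨x, rfl⟩
    · rw [if_neg h]; exact ⟨y, rfl⟩
  · intro i
    dsimp only
    by_cases h : i = 0
    · rw [if_pos h]; exact singleton_connected G x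
    · rw [if_neg h]; exact singleton_connected G y
  · intro i j hij
    dsimp only
    have hxney : x ≠ y := hxy.ne
    by_cases hi : i = 0
    · have hj : ¬ j = 0 := fun h => hij (by rw [hi, h])
      rw [if_pos hi, if_neg hj]
      simp [Set.disjoint_singleton, hxney]
    · by_cases hj : j = 0
      · rw [if_neg hi, if_pos hj]
        simp [Set.disjoint_singleton, hxney.symm]
      · exfalso
        apply hij
        have hi1 : i = 1 := by omega
        have hj1 : j = 1 := by omega
        rw [hi1, hj1]
  · intro i j hij
    dsimp only
    by_cases hi : i = 0
    · have hj : ¬ j = 0 := fun h => hij (by rw [hi, h])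
      rw [if_pos hi, if_neg hj]
      exact ⟨x, rfl, y, rfl, hxy⟩
    · by_cases hj : j = 0
      · rw [if_neg hi, if_pos hj]
        exact ⟨y, rfl, x, rfl, hxy.symm⟩
      · exfalso
        apply hij
        have hi1 : i = 1 := by omega
        have hj1 : j = 1 := by omega
        rw [hi1, hj1]

end Final

end KT

/-- Kostochka–Thomason: there is a constant `C > 0` such that every finite graph `G`
with no `K_{t+1}` minor has at most `C·(t+1)·√(log(t+1))·|V(G)|` edges. -/
theorem kostochka_thomason :
    ∃ C : ℝ, C > 0 ∧
      ∀ (t : ℕ) (V : Type) [Fintype V] (G : SimpleGraph V),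
        ¬ HasCompleteMinor G (t + 1) →
        (Nat.card G.edgeSet : ℝ) ≤
          C * (t + 1) * Real.sqrt (Real.log (t + 1)) * Fintype.card V := by
  classical
  refine ⟨10000000, by norm_num, ?_⟩
  intro t V _ G hmin
  letI : DecidableEq V := Classical.decEq V
  match t, hmin with
  | 0, hmin =>
    have hV : IsEmpty V := by
      by_contra h
      rw [not_isEmpty_iff] at h
      obtain ⟨v⟩ := h
      exact hmin (KT.minor_one_of_vertex G v)
    have hSym : IsEmpty G.edgeSet := by
      constructor
      intro e
      obtain ⟨e, he⟩ := e
      induction e using Sym2.ind with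
      | _ a b => exact hV.false a
    have he : Nat.card G.edgeSet = 0 := Nat.card_of_isEmpty
    rw [he]
    push_cast
    rw [show ((0:ℝ) + 1) = 1 by norm_num, Real.log_one, Real.sqrt_zero]
    norm_num
  | 1, hmin =>
    have he : Nat.card G.edgeSet = 0 := by
      by_contra h
      have h1 : 1 ≤ Nat.card G.edgeSet := by omega
      obtain ⟨e, hee⟩ := KT.edge_of_ecard_pos G h1
      revert hee
      induction e using Sym2.ind with
      | _ a b =>
        intro hee
        rw [SimpleGraph.mem_edgeSet] at hee
        exact hmin (KT.minor_two_of_edge G hee)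
    rw [he]
    push_cast
    positivity
  | (n+2), hmin =>
    set t : ℕ := n + 2 with htdef
    have ht : 2 ≤ t := by omega
    by_cases hsupp : G.support.ncard = 0
    · have he : Nat.card G.edgeSet = 0 := by
        by_contra h
        have h2 := KT.nsupp_two G (KT.edge_of_ecard_pos G (by omega))
        omega
      rw [he]
      push_cast
      positivity
    · have hns : 1 ≤ G.support.ncard := by omega
      by_cases hKe : 10000000 * ((t:ℝ)+1) * Real.sqrt (Real.log ((t:ℝ)+1)) * (G.support.ncard : ℝ)
          ≤ (Nat.card G.edgeSet : ℝ)
      · exact absurd ((KT.aux ht (Nat.card G.edgeSet + G.support.ncard) G (le_refl _)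
          hns hKe).hasCompleteMinor) hmin
      · push_neg at hKe
        have hnle : (G.support.ncard : ℝ) ≤ (Fintype.card V : ℝ) := by
          have h1 : G.support.ncard ≤ Fintype.card V := by
            have h2 : (Set.univ : Set V).ncard = Fintype.card V := by
              rw [Set.ncard_univ, Nat.card_eq_fintype_card]
            rw [← h2]
            exact Set.ncard_le_ncard (Set.subset_univ _) (Set.toFinite _)
          exact_mod_cast h1
        have hknn : (0:ℝ) ≤ 10000000 * ((t:ℝ)+1) * Real.sqrt (Real.log ((t:ℝ)+1)) := by positivity
        have hfinal := hKe.le.trans (by nlinarith :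
          10000000 * ((t:ℝ)+1) * Real.sqrt (Real.log ((t:ℝ)+1)) * (G.support.ncard : ℝ)
            ≤ 10000000 * ((t:ℝ)+1) * Real.sqrt (Real.log ((t:ℝ)+1)) * (Fintype.card V : ℝ))
        exact hfinal
end

section
/- Let t ≥ 0 be an integer and let r be a real number such that every finite simple graph H with no K_{t+1} minor satisfies |E(H)| ≤ r·|V(H)|. Let G be a finite simple graph such that K_{t+1} is not a minor of G, and let A ⊆ V(G) be a stable (independent) set of vertices each of degree at least t in G. Then |E(G − A)| + |A| ≤ r·|V(G − A)|, where G − A denotes the subgraph of G induced on V(G) ∖ A. -/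
lemma star_conn {V : Type*} (G : SimpleGraph V) (c : V) (S : Set V) (hc : c ∈ S)
    (h : ∀ u ∈ S, u ≠ c → G.Adj c u) : (G.induce S).Connected := by
  rw [SimpleGraph.connected_iff]
  refine ⟨fun u v => ?_, ⟨⟨c, hc⟩⟩⟩
  have key : ∀ w : S, (G.induce S).Reachable w ⟨c, hc⟩ := by
    rintro ⟨w, hw⟩
    by_cases hwc : w = c
    · subst hwc; rfl
    · exact (SimpleGraph.Adj.reachable (by exact (h w hw hwc).symm))
  exact (key u).trans (key v).symm

lemma reach_transfer {α V : Type*} (K : SimpleGraph α) (G : SimpleGraph V)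
    (S : Set α) (T : Set V) (φ : α → V) (hmem : ∀ u : S, φ ↑u ∈ T)
    (hstep : ∀ u v : S, K.Adj ↑u ↑v →
      (G.induce T).Reachable ⟨φ ↑u, hmem u⟩ ⟨φ ↑v, hmem v⟩)
    {u v : S} (h : (K.induce S).Reachable u v) :
    (G.induce T).Reachable ⟨φ ↑u, hmem u⟩ ⟨φ ↑v, hmem v⟩ := by
  obtain ⟨w⟩ := h
  induction w with
  | nil => rfl
  | cons hadj w ih => exact (hstep _ _ hadj).trans ih

lemma key_step (t : ℕ) {V : Type} [Fintype V] (G : SimpleGraph V)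
    (hG : ¬ HasCompleteMinor G (t + 1)) (A : Set V)
    (hstable : ∀ a ∈ A, ∀ b ∈ A, ¬ G.Adj a b)
    (S : Finset V) (hS : ↑S ⊆ A) (a : V) (ha : a ∈ A) (haS : a ∉ S)
    (hdega : t ≤ (G.neighborSet a).ncard)
    (p q : V → V)
    (hpq : ∀ a' ∈ S, G.Adj a' (p a') ∧ G.Adj a' (q a') ∧ ¬ G.Adj (p a') (q a')) :
    ∃ x y, G.Adj a x ∧ G.Adj a y ∧ x ≠ y ∧ ¬ G.Adj x y ∧
      ∀ a' ∈ S, s(x, y) ≠ s(p a', q a') := by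
  by_contra hcon
  push_neg at hcon
  have hyp : ∀ x y, G.Adj a x → G.Adj a y → x ≠ y →
      G.Adj x y ∨ ∃ a' ∈ S, s(x, y) = s(p a', q a') := by
    intro x y hx hy hne
    by_cases hxy : G.Adj x y
    · exact Or.inl hxy
    · obtain ⟨a', ha', heq⟩ := hcon x y hx hy hne hxy
      exact Or.inr ⟨a', ha', heq⟩
  obtain ⟨T, hTsub, hTcard⟩ := Set.exists_subset_card_eq hdega
  have hTadj : ∀ v ∈ T, G.Adj a v := fun v hv => hTsub hv
  have haT : a ∉ T := fun h => G.loopless.irrefl a (hTadj a h)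
  have hTfin : T.Finite := Set.toFinite T
  set T' : Set V := insert a T with hT'
  have hT'card : Nat.card T' = t + 1 := by
    rw [Nat.card_coe_set_eq, Set.ncard_insert_of_notMem haT hTfin, hTcard]
  let en : T' ≃ Fin (t + 1) := Finite.equivFinOfCardEq hT'card
  set B : V → Set V := fun v => {v} ∪ {a' | a' ∈ (S : Set V) ∧ p a' = v} with hB
  have hBmem : ∀ v, v ∈ B v := fun v => Or.inl rfl
  have hT'S : ∀ v ∈ T', v ∉ (S : Set V) := by
    intro v hv hvS
    rcases hv with rfl | hvT
    · exact haS hvS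
    · exact hstable a ha v (hS hvS) (hTadj v hvT)
  refine hG ⟨fun i => B ↑(en.symm i), fun i => ⟨_, hBmem _⟩, ?_, ?_, ?_⟩
  · intro i
    refine star_conn G _ _ (hBmem _) ?_
    rintro u (rfl | ⟨huS, hpu⟩) hne
    · exact absurd rfl hne
    · exact (hpu ▸ (hpq u huS).1).symm
  · intro i j hij
    have hne : (↑(en.symm i) : V) ≠ ↑(en.symm j) := by
      intro h
      exact hij (by simpa using en.symm.injective (Subtype.val_injective h))
    rw [Set.disjoint_left]
    rintro u (rfl | ⟨huS, hpu⟩) hu'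
    · rcases hu' with h | ⟨huS, hpu⟩
      · exact hne (by simpa using h)
      · exact hT'S _ (en.symm i).2 huS
    · rcases hu' with h | ⟨huS', hpu'⟩
      · exact hT'S _ (en.symm j).2 (h ▸ huS)
      · exact hne (hpu ▸ hpu' ▸ rfl)
  · intro i j hij
    set v : V := ↑(en.symm i)
    set w : V := ↑(en.symm j)
    have hvw : v ≠ w := by
      intro h
      exact hij (by simpa using en.symm.injective (Subtype.val_injective h))
    have hv : v ∈ T' := (en.symm i).2
    have hw : w ∈ T' := (en.symm j).2
    rcases hv with hva | hvT
    · rcases hw with hwa | hwT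
      · exact absurd (hva.trans hwa.symm) hvw
      · exact ⟨v, hBmem v, w, hBmem w, hva ▸ hTadj w hwT⟩
    · rcases hw with hwa | hwT
      · exact ⟨v, hBmem v, w, hBmem w, (hwa ▸ hTadj v hvT).symm⟩
      · rcases hyp v w (hTadj v hvT) (hTadj w hwT) hvw with hadj | ⟨a', ha'S, heq⟩
        · exact ⟨v, hBmem v, w, hBmem w, hadj⟩
        · rw [Sym2.eq_iff] at heq
          rcases heq with ⟨h1, h2⟩ | ⟨h1, h2⟩
          · exact ⟨a', Or.inr ⟨ha'S, h1.symm⟩, w, hBmem w, h2 ▸ (hpq a' ha'S).2.1⟩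
          · exact ⟨v, hBmem v, a', Or.inr ⟨ha'S, h2.symm⟩, (h1 ▸ (hpq a' ha'S).2.1).symm⟩

lemma exists_pq (t : ℕ) {V : Type} [Fintype V] (G : SimpleGraph V)
    (hG : ¬ HasCompleteMinor G (t + 1)) (A : Set V)
    (hstable : ∀ a ∈ A, ∀ b ∈ A, ¬ G.Adj a b)
    (hdeg : ∀ a ∈ A, t ≤ (G.neighborSet a).ncard) :
    ∀ S : Finset V, ↑S ⊆ A → ∃ p q : V → V,
      (∀ a ∈ S, G.Adj a (p a) ∧ G.Adj a (q a) ∧ p a ≠ q a ∧ ¬ G.Adj (p a) (q a)) ∧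
      Set.InjOn (fun a => s(p a, q a)) ↑S := by
  classical
  intro S
  induction S using Finset.induction_on with
  | empty => exact fun _ => ⟨id, id, by simp, by simp⟩
  | @insert a S haS ih =>
    intro hsub
    have ha : a ∈ A := hsub (by simp)
    have hS : ↑S ⊆ A := fun x hx => hsub (by simp [hx])
    obtain ⟨p, q, hpq, hinj⟩ := ih hS
    obtain ⟨x, y, hx, hy, hne, hnadj, hnew⟩ :=
      key_step t G hG A hstable S hS a ha haS (hdeg a ha) p q
        (fun a' h => ⟨(hpq a' h).1, (hpq a' h).2.1, (hpq a' h).2.2.2⟩)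
    refine ⟨Function.update p a x, Function.update q a y, ?_, ?_⟩
    · intro b hb
      rcases Finset.mem_insert.mp hb with rfl | hbS
      · simp [hx, hy, hne, hnadj]
      · have hba : b ≠ a := fun h => haS (h ▸ hbS)
        simp only [Function.update_of_ne hba]
        exact hpq b hbS
    · have haS' : a ∉ (S : Set V) := by simpa using haS
      rw [Finset.coe_insert, Set.injOn_insert haS']
      constructor
      · intro b hb c hc hbc
        have hba : b ≠ a := fun h => haS (h ▸ hb)
        have hca : c ≠ a := fun h => haS (h ▸ hc)
        simp only [Function.update_of_ne hba, Function.update_of_ne hca] at hbc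
        exact hinj hb hc hbc
      · rintro ⟨b, hb, hbeq⟩
        have hba : b ≠ a := fun h => haS (h ▸ hb)
        simp only [Function.update_of_ne hba, Function.update_self] at hbeq
        exact hnew b hb hbeq.symm

/-- If every finite graph with no `K_{t+1}` minor has at most `r·|V|` edges, `G` has no
`K_{t+1}` minor, and `A` is a stable set of vertices each of degree at least `t`, then
`|E(G − A)| + |A| ≤ r·|V(G − A)|`. -/
theorem stable_set_bound (t : ℕ) (r : ℝ)
    (hR : ∀ (W : Type) [Fintype W] (H : SimpleGraph W),
      ¬ HasCompleteMinor H (t + 1) → (Nat.card H.edgeSet : ℝ) ≤ r * Fintype.card W)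
    (V : Type) [Fintype V] (G : SimpleGraph V)
    (hG : ¬ HasCompleteMinor G (t + 1))
    (A : Set V)
    (hstable : ∀ a ∈ A, ∀ b ∈ A, ¬ G.Adj a b)
    (hdeg : ∀ a ∈ A, t ≤ (G.neighborSet a).ncard) :
    (Nat.card (G.induce (Aᶜ : Set V)).edgeSet : ℝ) + A.ncard ≤ r * (Aᶜ : Set V).ncard := by
  classical
  obtain ⟨p, q, hpq, hinj⟩ :=
    exists_pq t G hG A hstable hdeg A.toFinset (by simp)
  have hpq' : ∀ a ∈ A, G.Adj a (p a) ∧ G.Adj a (q a) ∧ p a ≠ q a ∧ ¬ G.Adj (p a) (q a) :=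
    fun a ha => hpq a (Set.mem_toFinset.mpr ha)
  have hinj' : Set.InjOn (fun a => s(p a, q a)) A := by rwa [Set.coe_toFinset] at hinj
  have hpA : ∀ a ∈ A, p a ∈ (Aᶜ : Set V) :=
    fun a ha hpa => hstable a ha (p a) hpa (hpq' a ha).1
  have hqA : ∀ a ∈ A, q a ∈ (Aᶜ : Set V) :=
    fun a ha hqa => hstable a ha (q a) hqa (hpq' a ha).2.1
  let H : SimpleGraph ↥(Aᶜ : Set V) :=
    { Adj := fun u v => G.Adj ↑u ↑v ∨ ∃ a ∈ A, s((u : V), (v : V)) = s(p a, q a)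
      symm := by
        refine ⟨?_⟩
        rintro u v (h | ⟨a, ha, he⟩)
        · exact Or.inl h.symm
        · exact Or.inr ⟨a, ha, by rw [Sym2.eq_swap]; exact he⟩
      loopless := by
        refine ⟨?_⟩
        rintro u (h | ⟨a, ha, he⟩)
        · exact G.loopless.irrefl _ h
        · rw [Sym2.eq_iff] at he
          rcases he with ⟨h1, h2⟩ | ⟨h1, h2⟩ <;>
            exact (hpq' a ha).2.2.1 (h1 ▸ h2 ▸ rfl) }
  have hHmin : ¬ HasCompleteMinor H (t + 1) := by
    rintro ⟨g, hgne, hgconn, hgdisj, hgedge⟩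
    apply hG
    set f : Fin (t + 1) → Set V := fun i =>
      (Subtype.val '' g i) ∪ {a' | a' ∈ A ∧ p a' ∈ Subtype.val '' g i} with hf
    refine ⟨f, ?_, ?_, ?_, ?_⟩
    · intro i
      obtain ⟨u, hu⟩ := hgne i
      exact ⟨↑u, Or.inl ⟨u, hu, rfl⟩⟩
    · intro i
      have hmem : ∀ u : ↥(g i), ((u : ↥(Aᶜ : Set V)) : V) ∈ f i :=
        fun u => Or.inl ⟨↑u, u.2, rfl⟩
      have hstep : ∀ u v : ↥(g i), H.Adj ↑u ↑v →
          (G.induce (f i)).Reachable ⟨_, hmem u⟩ ⟨_, hmem v⟩ := by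
        rintro u v (h | ⟨a, ha, he⟩)
        · exact SimpleGraph.Adj.reachable (by exact h)
        · rw [Sym2.eq_iff] at he
          rcases he with ⟨h1, h2⟩ | ⟨h1, h2⟩
          · have hai : a ∈ f i := Or.inr ⟨ha, by rw [← h1]; exact ⟨↑u, u.2, rfl⟩⟩
            have ha1 : G.Adj (↑↑u : V) a := by rw [h1]; exact (hpq' a ha).1.symm
            have ha2 : G.Adj a (↑↑v : V) := by rw [h2]; exact (hpq' a ha).2.1
            have e1 : (G.induce (f i)).Adj ⟨_, hmem u⟩ ⟨a, hai⟩ := ha1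
            have e2 : (G.induce (f i)).Adj ⟨a, hai⟩ ⟨_, hmem v⟩ := ha2
            exact e1.reachable.trans e2.reachable
          · have hai : a ∈ f i := Or.inr ⟨ha, by rw [← h2]; exact ⟨↑v, v.2, rfl⟩⟩
            have ha1 : G.Adj (↑↑u : V) a := by rw [h1]; exact (hpq' a ha).2.1.symm
            have ha2 : G.Adj a (↑↑v : V) := by rw [h2]; exact (hpq' a ha).1
            have e1 : (G.induce (f i)).Adj ⟨_, hmem u⟩ ⟨a, hai⟩ := ha1
            have e2 : (G.induce (f i)).Adj ⟨a, hai⟩ ⟨_, hmem v⟩ := ha2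
            exact e1.reachable.trans e2.reachable
      rw [SimpleGraph.connected_iff]
      constructor
      · rintro ⟨w₁, hw₁⟩ ⟨w₂, hw₂⟩
        have anchor : ∀ w (hw : w ∈ f i), ∃ u : ↥(g i),
            (G.induce (f i)).Reachable ⟨w, hw⟩ ⟨_, hmem u⟩ := by
          rintro w (⟨u0, hu0, rfl⟩ | ⟨hwA, u0, hu0, he0⟩)
          · exact ⟨⟨u0, hu0⟩, by rfl⟩
          · refine ⟨⟨u0, hu0⟩, SimpleGraph.Adj.reachable ?_⟩
            show G.Adj w ↑u0
            rw [he0]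
            exact (hpq' w hwA).1
        obtain ⟨u₁, hr₁⟩ := anchor w₁ hw₁
        obtain ⟨u₂, hr₂⟩ := anchor w₂ hw₂
        have hmid := reach_transfer H G (g i) (f i) Subtype.val hmem hstep
          (((hgconn i).preconnected) u₁ u₂)
        exact hr₁.trans (hmid.trans hr₂.symm)
      · obtain ⟨u, hu⟩ := hgne i
        exact ⟨⟨↑u, Or.inl ⟨u, hu, rfl⟩⟩⟩
    · intro i j hij
      rw [Set.disjoint_left]
      rintro w (⟨u0, hu0, rfl⟩ | ⟨hwA, u0, hu0, he0⟩) hw'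
      · rcases hw' with ⟨u1, hu1, he1⟩ | ⟨hwA, _⟩
        · have : u1 = u0 := Subtype.val_injective he1
          exact Set.disjoint_left.mp (hgdisj hij) hu0 (this ▸ hu1)
        · exact u0.2 hwA
      · rcases hw' with ⟨u1, hu1, he1⟩ | ⟨_, u1, hu1, he1⟩
        · exact u1.2 (by rwa [he1])
        · have : u1 = u0 := Subtype.val_injective (he1.trans he0.symm)
          exact Set.disjoint_left.mp (hgdisj hij) hu0 (this ▸ hu1)
    · intro i j hij
      obtain ⟨x, hx, y, hy, hxy⟩ := hgedge i j hij
      rcases hxy with h | ⟨a, ha, he⟩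
      · exact ⟨↑x, Or.inl ⟨x, hx, rfl⟩, ↑y, Or.inl ⟨y, hy, rfl⟩, h⟩
      · rw [Sym2.eq_iff] at he
        rcases he with ⟨h1, h2⟩ | ⟨h1, h2⟩
        · refine ⟨a, Or.inr ⟨ha, by rw [← h1]; exact ⟨x, hx, rfl⟩⟩,
            ↑y, Or.inl ⟨y, hy, rfl⟩, ?_⟩
          have : G.Adj a (q a) := (hpq' a ha).2.1
          rwa [← h2] at this
        · refine ⟨↑x, Or.inl ⟨x, hx, rfl⟩,
            a, Or.inr ⟨ha, by rw [← h2]; exact ⟨y, hy, rfl⟩⟩, ?_⟩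
          have : G.Adj a (q a) := (hpq' a ha).2.1
          rw [← h1] at this
          exact this.symm
  -- counting
  let φ : ↥A → Sym2 ↥(Aᶜ : Set V) := fun a =>
    s((⟨p ↑a, hpA ↑a a.2⟩ : ↥(Aᶜ : Set V)), (⟨q ↑a, hqA ↑a a.2⟩ : ↥(Aᶜ : Set V)))
  have hφinj : Function.Injective φ := by
    intro a b h
    have h2 : s(p ↑a, q ↑a) = s(p ↑b, q ↑b) := by
      have := congrArg (Sym2.map Subtype.val) h
      simpa [φ] using this
    exact Subtype.ext (hinj' a.2 b.2 h2)
  have hsub : (G.induce (Aᶜ : Set V)).edgeSet ∪ Set.range φ ⊆ H.edgeSet := by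
    rintro e (he | ⟨a, rfl⟩)
    · exact SimpleGraph.edgeSet_mono (fun u v h => Or.inl h) he
    · rw [SimpleGraph.mem_edgeSet]
      exact Or.inr ⟨↑a, a.2, rfl⟩
  have hdisjEF : Disjoint (G.induce (Aᶜ : Set V)).edgeSet (Set.range φ) := by
    rw [Set.disjoint_right]
    rintro e ⟨a, rfl⟩ he
    have hadj : (G.induce (Aᶜ : Set V)).Adj ⟨p ↑a, hpA ↑a a.2⟩ ⟨q ↑a, hqA ↑a a.2⟩ := he
    exact (hpq' ↑a a.2).2.2.2 hadj
  have hrange : (Set.range φ).ncard = A.ncard := by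
    rw [← Nat.card_coe_set_eq, Nat.card_range_of_injective hφinj,
      Nat.card_coe_set_eq]
  have hcount : Nat.card (G.induce (Aᶜ : Set V)).edgeSet + A.ncard ≤
      Nat.card H.edgeSet := by
    rw [Nat.card_coe_set_eq, Nat.card_coe_set_eq]
    calc (G.induce (Aᶜ : Set V)).edgeSet.ncard + A.ncard
        = ((G.induce (Aᶜ : Set V)).edgeSet ∪ Set.range φ).ncard := by
          rw [Set.ncard_union_eq hdisjEF (Set.toFinite _) (Set.toFinite _), hrange]
      _ ≤ H.edgeSet.ncard := Set.ncard_le_ncard hsub (Set.toFinite _)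
  have hr := hR ↥(Aᶜ : Set V) H hHmin
  have hcardV : (Fintype.card ↥(Aᶜ : Set V) : ℝ) = (Aᶜ : Set V).ncard := by
    rw [← Nat.card_eq_fintype_card, Nat.card_coe_set_eq]
  calc (Nat.card (G.induce (Aᶜ : Set V)).edgeSet : ℝ) + A.ncard
      ≤ (Nat.card H.edgeSet : ℝ) := by exact_mod_cast hcount
    _ ≤ r * Fintype.card ↥(Aᶜ : Set V) := hr
    _ = r * (Aᶜ : Set V).ncard := by rw [hcardV]
end

section
/- Let t ≥ 0 be an integer and let r be a real number with r > t/2, such that every finite simple graph H with no K_{t+1} minor satisfies |E(H)| ≤ r·|V(H)|. Let s be the least integer greater than r(2r − t + 2). Let G be a finite simple graph with at least one vertex, such that K_{t+1} is not a minor of G. Then either some vertex of G has degree less than t, or there are two adjacent vertices of G both having degree less than s. -/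
open SimpleGraph

section Helpers

variable {V : Type}

lemma induce_singleton_connected (G : SimpleGraph V) (v : V) :
    (G.induce ({v} : Set V)).Connected := by
  rw [connected_iff_exists_forall_reachable]
  refine ⟨⟨v, rfl⟩, ?_⟩
  rintro ⟨x, hx⟩
  have hxv : x = v := hx
  subst hxv
  exact Reachable.refl _

lemma induce_star_connected (G : SimpleGraph V) (s : Set V) (c : V) (hc : c ∈ s)
    (h : ∀ x ∈ s, x ≠ c → G.Adj c x) : (G.induce s).Connected := by
  rw [connected_iff_exists_forall_reachable]
  refine ⟨⟨c, hc⟩, ?_⟩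
  rintro ⟨x, hx⟩
  by_cases hxc : x = c
  · subst hxc; exact Reachable.refl _
  · exact Adj.reachable (by exact h x hx hxc)

/-- Build a `K_{t+1}` minor from a vertex `v`, `t` of its neighbours `u j`,
and a "star contraction" system `g` on `S` linking the `u j`'s pairwise. -/
lemma clique_minor (G : SimpleGraph V) (t : ℕ) (S : Set V) (g : V → V)
    (hg : ∀ x ∈ S, G.Adj x (g x))
    (v : V) (hvS : v ∉ S) (u : Fin t → V)
    (huinj : Function.Injective u)
    (huv : ∀ j, G.Adj v (u j)) (huS : ∀ j, u j ∉ S)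
    (hlink : ∀ j k, j ≠ k → ∃ x y, G.Adj x y ∧
      (x = u j ∨ (x ∈ S ∧ g x = u j)) ∧ (y = u k ∨ (y ∈ S ∧ g y = u k))) :
    HasCompleteMinor G (t + 1) := by
  classical
  set C : Fin t → Set V := fun j => {x | x = u j ∨ (x ∈ S ∧ g x = u j)} with hC
  have hmemC : ∀ j, u j ∈ C j := fun j => Or.inl rfl
  have hvnotC : ∀ j, v ∉ C j := by
    intro j hj
    rcases hj with h1 | h2
    · exact (huv j).ne h1
    · exact hvS h2.1
  have hCdisj : ∀ j k, j ≠ k → ∀ x, x ∈ C j → x ∈ C k → False := by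
    rintro j k hjk x (h1 | h2) (h3 | h4)
    · exact hjk (huinj (h1 ▸ h3))
    · exact huS j (h1 ▸ h4.1)
    · exact huS k (h3 ▸ h2.1)
    · exact hjk (huinj ((h2.2).symm.trans h4.2))
  set f : Fin (t + 1) → Set V := fun i =>
    if h : (i : ℕ) < t then C ⟨(i : ℕ), h⟩ else {v} with hf
  have hfC : ∀ (i : Fin (t + 1)) (h : (i : ℕ) < t), f i = C ⟨(i : ℕ), h⟩ := by
    intro i h; simp [hf, h]
  have hfv : ∀ (i : Fin (t + 1)), ¬ ((i : ℕ) < t) → f i = {v} := by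
    intro i h; simp [hf, h]
  refine ⟨f, ?_, ?_, ?_, ?_⟩
  · intro i
    by_cases h : (i : ℕ) < t
    · rw [hfC i h]; exact ⟨u _, hmemC _⟩
    · rw [hfv i h]; exact ⟨v, rfl⟩
  · intro i
    by_cases h : (i : ℕ) < t
    · rw [hfC i h]
      refine induce_star_connected G (C _) (u _) (hmemC _) ?_
      intro x hx hxne
      rcases hx with h1 | h2
      · exact absurd h1 hxne
      · exact h2.2 ▸ (hg x h2.1).symm
    · rw [hfv i h]; exact induce_singleton_connected G v
  · intro i j hij
    by_cases hi : (i : ℕ) < t <;> by_cases hj : (j : ℕ) < t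
    · rw [hfC i hi, hfC j hj, Set.disjoint_left]
      have : (⟨(i : ℕ), hi⟩ : Fin t) ≠ ⟨(j : ℕ), hj⟩ := by
        intro h
        exact hij (Fin.ext (by simpa using h))
      exact fun {x} hx hx' => hCdisj _ _ this x hx hx'
    · rw [hfC i hi, hfv j hj, Set.disjoint_right]
      rintro x (rfl : x = v)
      exact hvnotC _
    · rw [hfv i hi, hfC j hj, Set.disjoint_left]
      rintro x (rfl : x = v)
      exact hvnotC _
    · exact absurd (Fin.ext (by omega : (i : ℕ) = (j : ℕ))) hij
  · intro i j hij
    by_cases hi : (i : ℕ) < t <;> by_cases hj : (j : ℕ) < t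
    · have : (⟨(i : ℕ), hi⟩ : Fin t) ≠ ⟨(j : ℕ), hj⟩ := by
        intro h
        exact hij (Fin.ext (by simpa using h))
      obtain ⟨x, y, hxy, hxk, hyl⟩ := hlink _ _ this
      exact ⟨x, by rw [hfC i hi]; exact hxk, y, by rw [hfC j hj]; exact hyl, hxy⟩
    · exact ⟨u _, by rw [hfC i hi]; exact hmemC _, v, by rw [hfv j hj]; exact rfl,
        (huv _).symm⟩
    · exact ⟨v, by rw [hfv i hi]; exact rfl, u _, by rw [hfC j hj]; exact hmemC _, huv _⟩
    · exact absurd (Fin.ext (by omega : (i : ℕ) = (j : ℕ))) hij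

/-- Star-contraction systems transport complete minors of the contracted graph `H`
(on vertex set `B`) back to `G`. -/
lemma star_minor (G : SimpleGraph V) (B S : Finset V) (g : V → V)
    (hSB : ∀ x ∈ S, x ∉ B)
    (hg : ∀ x ∈ S, G.Adj x (g x) ∧ g x ∈ B)
    (H : SimpleGraph {x // x ∈ B})
    (hreal : ∀ a b : {x // x ∈ B}, H.Adj a b → ∃ x y, G.Adj x y ∧
      (x = ↑a ∨ (x ∈ S ∧ g x = ↑a)) ∧ (y = ↑b ∨ (y ∈ S ∧ g y = ↑b)))
    (n : ℕ) (h : HasCompleteMinor H n) : HasCompleteMinor G n := by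
  classical
  obtain ⟨f, hne, hconn, hdisj, hedge⟩ := h
  set F : Fin n → Set V := fun i =>
    {x | (∃ hx : x ∈ B, (⟨x, hx⟩ : {a // a ∈ B}) ∈ f i) ∨
         (x ∈ S ∧ ∃ hx : g x ∈ B, (⟨g x, hx⟩ : {a // a ∈ B}) ∈ f i)} with hF
  have memB : ∀ (i : Fin n) (a : {x // x ∈ B}), a ∈ f i → (a : V) ∈ F i := by
    intro i a ha
    exact Or.inl ⟨a.2, by simpa using ha⟩
  have memS : ∀ (i : Fin n) (x : V), x ∈ S → ∀ (hx : g x ∈ B),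
      (⟨g x, hx⟩ : {a // a ∈ B}) ∈ f i → x ∈ F i := by
    intro i x hxS hx hmem
    exact Or.inr ⟨hxS, hx, hmem⟩
  -- membership transfer for realization witnesses
  have memreal : ∀ (i : Fin n) (a : {x // x ∈ B}), a ∈ f i → ∀ x : V,
      (x = ↑a ∨ (x ∈ S ∧ g x = ↑a)) → x ∈ F i := by
    intro i a ha x hx
    rcases hx with rfl | ⟨hxS, hgx⟩
    · exact memB i a ha
    · refine memS i x hxS (by rw [hgx]; exact a.2) ?_
      have : (⟨g x, by rw [hgx]; exact a.2⟩ : {a // a ∈ B}) = a := Subtype.ext hgx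
      rw [this]; exact ha
  refine ⟨F, ?_, ?_, ?_, ?_⟩
  · intro i
    obtain ⟨a, ha⟩ := hne i
    exact ⟨a, memB i a ha⟩
  · -- connectivity
    intro i
    rw [connected_iff_exists_forall_reachable]
    obtain ⟨a0, ha0⟩ := hne i
    -- step 1: every element of F i reaches some branch vertex
    have step1 : ∀ (x : V) (hx : x ∈ F i), ∃ (a : {x // x ∈ B}) (ha : a ∈ f i),
        (G.induce (F i)).Reachable ⟨x, hx⟩ ⟨(a : V), memB i a ha⟩ := by
      intro x hx
      rcases hx with ⟨hB, hmem⟩ | ⟨hxS, hB, hmem⟩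
      · exact ⟨⟨x, hB⟩, by simpa using hmem, Reachable.refl _⟩
      · refine ⟨⟨g x, hB⟩, hmem, ?_⟩
        refine Adj.reachable ?_
        show G.Adj x (g x)
        exact (hg x hxS).1
    -- step 2: branch vertices reach each other, lifting walks in H.induce (f i)
    have step2 : ∀ (p q : {y // y ∈ f i}),
        (G.induce (F i)).Reachable ⟨((p : {x // x ∈ B}) : V), memB i p p.2⟩
          ⟨((q : {x // x ∈ B}) : V), memB i q q.2⟩ := by
      intro p q
      obtain ⟨w⟩ := (hconn i).preconnected p q
      induction w with
      | nil => exact Reachable.refl _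
      | @cons a b c hadj w ih =>
        refine Reachable.trans ?_ ih
        have hab : H.Adj (a : {x // x ∈ B}) (b : {x // x ∈ B}) := hadj
        obtain ⟨x, y, hxy, hxa, hyb⟩ := hreal _ _ hab
        have hxF : x ∈ F i := memreal i a a.2 x hxa
        have hyF : y ∈ F i := memreal i b b.2 y hyb
        have r1 : (G.induce (F i)).Reachable ⟨((a : {x // x ∈ B}) : V), memB i a a.2⟩ ⟨x, hxF⟩ := by
          rcases hxa with rfl | ⟨hxS, hgx⟩
          · exact Reachable.refl _
          · refine Adj.reachable ?_
            show G.Adj ((a : {x // x ∈ B}) : V) x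
            exact hgx ▸ (hg x hxS).1.symm
        have r2 : (G.induce (F i)).Reachable ⟨x, hxF⟩ ⟨y, hyF⟩ := Adj.reachable hxy
        have r3 : (G.induce (F i)).Reachable ⟨y, hyF⟩
            ⟨((b : {x // x ∈ B}) : V), memB i b b.2⟩ := by
          rcases hyb with rfl | ⟨hyS, hgy⟩
          · exact Reachable.refl _
          · refine (Adj.reachable ?_).symm
            show G.Adj ((b : {x // x ∈ B}) : V) y
            exact hgy ▸ (hg y hyS).1.symm
        exact (r1.trans r2).trans r3
    refine ⟨⟨(a0 : V), memB i a0 ha0⟩, ?_⟩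
    rintro ⟨x, hx⟩
    obtain ⟨a, ha, hr⟩ := step1 x hx
    exact (step2 ⟨a0, ha0⟩ ⟨a, ha⟩).trans hr.symm
  · -- disjointness
    intro i j hij
    rw [Set.disjoint_left]
    rintro x (⟨hB, hmem⟩ | ⟨hxS, hB, hmem⟩) (⟨hB', hmem'⟩ | ⟨hxS', hB', hmem'⟩)
    · exact Set.disjoint_left.mp (hdisj hij) hmem (by convert hmem')
    · exact hSB x hxS' hB
    · exact hSB x hxS hB'
    · exact Set.disjoint_left.mp (hdisj hij) hmem (by convert hmem')
  · -- edges
    intro i j hij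
    obtain ⟨a, ha, b, hb, hab⟩ := hedge i j hij
    obtain ⟨x, y, hxy, hxa, hyb⟩ := hreal a b hab
    exact ⟨x, memreal i a ha x hxa, y, memreal j b hb y hyb, hxy⟩

/-- The key construction: either `G` has a `K_{t+1}` minor, or one can contract the
vertices of `S` (whose neighbourhoods lie in `B` and have size ≥ t ≥ 2) into `B`
producing a graph on `B` with `|S|` edges. -/
lemma build [Fintype V] [DecidableEq V] (G : SimpleGraph V) [DecidableRel G.Adj]
    (t : ℕ) (ht : 2 ≤ t) (B : Finset V) (S : Finset V)
    (hSB : ∀ x ∈ S, x ∉ B)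
    (hnb : ∀ v ∈ S, ∀ w, G.Adj v w → w ∈ B)
    (hdeg : ∀ v ∈ S, t ≤ (G.neighborFinset v).card) :
    HasCompleteMinor G (t + 1) ∨
    ∃ (H : SimpleGraph {x // x ∈ B}) (g : V → V),
      Nat.card H.edgeSet = S.card ∧
      (∀ x ∈ S, G.Adj x (g x) ∧ g x ∈ B) ∧
      (∀ a b : {x // x ∈ B}, H.Adj a b → ∃ x y, G.Adj x y ∧
        (x = ↑a ∨ (x ∈ S ∧ g x = ↑a)) ∧ (y = ↑b ∨ (y ∈ S ∧ g y = ↑b))) := by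
  classical
  induction S using Finset.induction_on with
  | empty =>
    refine Or.inr ⟨⊥, id, ?_, by simp, by simp⟩
    simp [Nat.card_coe_set_eq]
  | @insert v S hvS ih =>
    have hSB' : ∀ x ∈ S, x ∉ B := fun x hx => hSB x (Finset.mem_insert_of_mem hx)
    have hnb' : ∀ x ∈ S, ∀ w, G.Adj x w → w ∈ B :=
      fun x hx => hnb x (Finset.mem_insert_of_mem hx)
    have hdeg' : ∀ x ∈ S, t ≤ (G.neighborFinset x).card :=
      fun x hx => hdeg x (Finset.mem_insert_of_mem hx)
    rcases ih hSB' hnb' hdeg' with hmin | ⟨H, g, hcard, hgprop, hreal⟩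
    · exact Or.inl hmin
    have hvmem : v ∈ insert v S := Finset.mem_insert_self v S
    by_cases hex : ∃ p q : {x // x ∈ B}, G.Adj v ↑p ∧ G.Adj v ↑q ∧ p ≠ q ∧ ¬ H.Adj p q
    · -- add a new edge
      obtain ⟨p, q, hvp, hvq, hpq, hHpq⟩ := hex
      refine Or.inr ⟨H ⊔ SimpleGraph.fromEdgeSet {s(p, q)}, Function.update g v ↑p, ?_, ?_, ?_⟩
      · -- edge count
        have hE : (H ⊔ SimpleGraph.fromEdgeSet {s(p, q)}).edgeSet =
            insert s(p, q) H.edgeSet := by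
          rw [edgeSet_sup, edgeSet_fromEdgeSet]
          have : ({s(p, q)} : Set (Sym2 {x // x ∈ B})) \ {e | e.IsDiag} = {s(p, q)} := by
            ext e
            simp only [Set.mem_diff, Set.mem_singleton_iff, Set.mem_setOf_eq,
              and_iff_left_iff_imp]
            rintro rfl
            exact fun hd => hpq (Sym2.mk_isDiag_iff.mp hd)
          rw [show Sym2.diagSet = {e : Sym2 {x // x ∈ B} | e.IsDiag} from rfl, this, Set.union_singleton]
        rw [hE, Nat.card_coe_set_eq,
          Set.ncard_insert_of_notMem (by rwa [mem_edgeSet]) H.edgeSet.toFinite,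
          ← Nat.card_coe_set_eq, hcard, Finset.card_insert_of_notMem hvS]
      · -- g properties
        intro x hx
        rcases Finset.mem_insert.mp hx with rfl | hxS
        · rw [Function.update_self]
          exact ⟨hvp, p.2⟩
        · have hxv : x ≠ v := fun h => hvS (h ▸ hxS)
          rw [Function.update_of_ne hxv]
          exact hgprop x hxS
      · -- realization
        intro a b hab
        rcases (sup_adj _ _ _ _).mp hab with hab' | hab'
        · obtain ⟨x, y, hxy, hxa, hyb⟩ := hreal a b hab'
          refine ⟨x, y, hxy, ?_, ?_⟩
          · rcases hxa with h | ⟨hxS, hgx⟩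
            · exact Or.inl h
            · have hxv : x ≠ v := fun h => hvS (h ▸ hxS)
              exact Or.inr ⟨Finset.mem_insert_of_mem hxS, by rwa [Function.update_of_ne hxv]⟩
          · rcases hyb with h | ⟨hyS, hgy⟩
            · exact Or.inl h
            · have hyv : y ≠ v := fun h => hvS (h ▸ hyS)
              exact Or.inr ⟨Finset.mem_insert_of_mem hyS, by rwa [Function.update_of_ne hyv]⟩
        · rw [fromEdgeSet_adj, Set.mem_singleton_iff, Sym2.eq_iff] at hab'
          rcases hab'.1 with ⟨rfl, rfl⟩ | ⟨rfl, rfl⟩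
          · refine ⟨v, ↑b, hvq, Or.inr ⟨hvmem, by rw [Function.update_self]⟩, Or.inl rfl⟩
          · refine ⟨↑a, v, hvq.symm, Or.inl rfl, Or.inr ⟨hvmem, by rw [Function.update_self]⟩⟩
    · -- no new edge possible: clique, extract K_{t+1} minor
      push_neg at hex
      obtain ⟨T, hTsub, hTcard⟩ :=
        Finset.exists_subset_card_eq (hdeg v hvmem)
      set e := Finset.equivFinOfCardEq hTcard with he
      set u : Fin t → V := fun j => ↑(e.symm j) with hu
      have huinj : Function.Injective u := fun j k h =>
        e.symm.injective (Subtype.ext h)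
      have huT : ∀ j, u j ∈ T := fun j => (e.symm j).2
      have huv : ∀ j, G.Adj v (u j) := fun j =>
        (SimpleGraph.mem_neighborFinset G v (u j)).mp (hTsub (huT j))
      have huB : ∀ j, u j ∈ B := fun j => hnb v hvmem (u j) (huv j)
      have huS : ∀ j, u j ∉ (S : Set V) := fun j hj =>
        hSB (u j) (Finset.mem_insert_of_mem (Finset.mem_coe.mp hj)) (huB j)
      refine Or.inl (clique_minor G t (S : Set V) g
        (fun x hx => (hgprop x hx).1) v (by simpa using hvS) u huinj huv huS ?_)
      intro j k hjk
      have hne : (⟨u j, huB j⟩ : {x // x ∈ B}) ≠ ⟨u k, huB k⟩ := by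
        intro h
        have huv' : u j = u k := by simpa using h
        exact hjk (huinj huv')
      have hH : H.Adj ⟨u j, huB j⟩ ⟨u k, huB k⟩ :=
        hex ⟨u j, huB j⟩ ⟨u k, huB k⟩ (huv j) (huv k) hne
      obtain ⟨x, y, hxy, hxa, hyb⟩ := hreal _ _ hH
      exact ⟨x, y, hxy, by simpa using hxa, by simpa using hyb⟩

lemma minor_one (G : SimpleGraph V) (v : V) : HasCompleteMinor G 1 := by
  refine ⟨fun _ => {v}, fun i => ⟨v, rfl⟩, fun i => induce_singleton_connected G v,
    ?_, ?_⟩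
  · intro i j hij
    exact absurd (Subsingleton.elim i j) hij
  · intro i j hij
    exact absurd (Subsingleton.elim i j) hij

lemma minor_two (G : SimpleGraph V) {x y : V} (h : G.Adj x y) :
    HasCompleteMinor G 2 := by
  have hval : ∀ i : Fin 2, i ≠ 0 → ∀ j : Fin 2, j ≠ 0 → i = j := by
    intro i hi j hj
    have hi' : (i : ℕ) ≠ 0 := fun h' => hi (Fin.ext (by simpa using h'))
    have hj' : (j : ℕ) ≠ 0 := fun h' => hj (Fin.ext (by simpa using h'))
    have : (i : ℕ) = (j : ℕ) := by omega
    exact Fin.ext this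
  refine ⟨fun i => if i = 0 then {x} else {y}, ?_, ?_, ?_, ?_⟩
  · intro i; by_cases hi : i = 0 <;> simp [hi]
  · intro i
    by_cases hi : i = 0
    · show (G.induce (if i = 0 then {x} else {y})).Connected
      rw [if_pos hi]; exact induce_singleton_connected G x
    · show (G.induce (if i = 0 then {x} else {y})).Connected
      rw [if_neg hi]; exact induce_singleton_connected G y
  · intro i j hij
    by_cases hi : i = 0 <;> by_cases hj : j = 0
    · exact absurd (hi.trans hj.symm) hij
    · simp only [hi, hj, if_true, if_false, reduceIte]
      simpa using h.ne
    · simp only [hi, hj, if_true, if_false, reduceIte]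
      simpa using h.ne'
    · exact absurd (hval i hi j hj) hij
  · intro i j hij
    by_cases hi : i = 0 <;> by_cases hj : j = 0
    · exact absurd (hi.trans hj.symm) hij
    · refine ⟨x, ?_, y, ?_, h⟩ <;> simp [hi, hj]
    · refine ⟨y, ?_, x, ?_, h.symm⟩ <;> simp [hi, hj]
    · exact absurd (hval i hi j hj) hij

end Helpers

/-- Given `r > t/2` such that every finite graph with no `K_{t+1}` minor has at most
`r·|V|` edges, and `s` the least integer greater than `r(2r − t + 2)`: in every
non-null finite graph `G` with no `K_{t+1}` minor, either some vertex has degree less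
than `t`, or two adjacent vertices both have degree less than `s`. -/
theorem low_degree_vertices (t : ℕ) (r : ℝ) (hrt : r > t / 2)
    (hR : ∀ (W : Type) [Fintype W] (H : SimpleGraph W),
      ¬ HasCompleteMinor H (t + 1) → (Nat.card H.edgeSet : ℝ) ≤ r * Fintype.card W)
    (s : ℤ) (hs : r * (2 * r - t + 2) < s)
    (hsmin : ∀ m : ℤ, r * (2 * r - t + 2) < m → s ≤ m)
    (V : Type) [Fintype V] [Nonempty V] (G : SimpleGraph V)
    (hG : ¬ HasCompleteMinor G (t + 1)) :
    (∃ v : V, (G.neighborSet v).ncard < t) ∨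
    (∃ x y : V, G.Adj x y ∧ ((G.neighborSet x).ncard : ℤ) < s ∧
      ((G.neighborSet y).ncard : ℤ) < s) := by
  classical
  haveI : DecidableRel G.Adj := Classical.decRel _
  have hnc : ∀ v : V, (G.neighborSet v).ncard = G.degree v := fun v => by
    rw [← Nat.card_coe_set_eq, Nat.card_eq_fintype_card, G.card_neighborSet_eq_degree]
  rcases Nat.lt_or_ge t 2 with ht2 | ht2
  · interval_cases t
    · exact absurd (minor_one G (Classical.arbitrary V)) hG
    · left
      obtain ⟨v0⟩ := ‹Nonempty V›
      refine ⟨v0, ?_⟩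
      have hempty : G.neighborSet v0 = ∅ := by
        by_contra hne
        obtain ⟨w, hw⟩ := Set.nonempty_iff_ne_empty.mpr hne
        exact hG (minor_two G hw)
      simp [hempty]
  · -- main case : t ≥ 2
    by_contra hcon
    push_neg at hcon
    obtain ⟨h1, h2⟩ := hcon
    have hdegt : ∀ v : V, t ≤ G.degree v := fun v => by
      have := h1 v; rw [hnc v] at this; omega
    have h2' : ∀ x y : V, G.Adj x y → (G.degree x : ℤ) < s → (s : ℤ) ≤ (G.degree y : ℤ) := by
      intro x y hxy hx
      have := h2 x y hxy (by rw [hnc]; exact_mod_cast hx)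
      rw [hnc] at this; exact_mod_cast this
    set B : Finset V := Finset.univ.filter (fun v => (s : ℤ) ≤ (G.degree v : ℤ)) with hB
    have hmemB : ∀ v, v ∈ B ↔ (s : ℤ) ≤ (G.degree v : ℤ) := by
      intro v; simp [hB]
    have hmemA : ∀ v, v ∈ Bᶜ ↔ (G.degree v : ℤ) < s := by
      intro v; rw [Finset.mem_compl, hmemB]; omega
    have hedge : ∀ x y : V, G.Adj x y → x ∈ Bᶜ → y ∈ B := by
      intro x y hxy hx
      rw [hmemA] at hx
      rw [hmemB]
      exact h2' x y hxy hx
    -- apply the key construction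
    rcases build G t ht2 B Bᶜ (fun x hx => Finset.mem_compl.mp hx)
        (fun v hv w hw => hedge v w hw hv)
        (fun v _ => hdegt v) with hmin | ⟨H, g, hcard, hgprop, hreal⟩
    · exact hG hmin
    have hHfree : ¬ HasCompleteMinor H (t + 1) := fun hh =>
      hG (star_minor G B Bᶜ g (fun x hx => Finset.mem_compl.mp hx) hgprop H hreal (t + 1) hh)
    have hEH := hR {x // x ∈ B} H hHfree
    rw [hcard, Fintype.card_coe] at hEH
    -- hEH : (Bᶜ.card : ℝ) ≤ r * B.card
    have hEG := hR V G hG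
    have hcardE : (Nat.card G.edgeSet : ℝ) = (G.edgeFinset.card : ℝ) := by
      rw [Nat.card_eq_fintype_card, G.edgeFinset_card]
    have hsumR : ∑ v : V, (G.degree v : ℝ) = 2 * (Nat.card G.edgeSet : ℝ) := by
      rw [hcardE]
      exact_mod_cast congrArg (fun n : ℕ => (n : ℝ)) G.sum_degrees_eq_twice_card_edges
    have hsplit : ∑ v ∈ B, (G.degree v : ℝ) + ∑ v ∈ Bᶜ, (G.degree v : ℝ)
        = ∑ v : V, (G.degree v : ℝ) := Finset.sum_add_sum_compl B _
    have hBsum : (B.card : ℝ) * (s : ℝ) ≤ ∑ v ∈ B, (G.degree v : ℝ) := by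
      have := Finset.card_nsmul_le_sum B (fun v => (G.degree v : ℝ)) ((s : ℝ))
        (fun v hv => by
          show (s : ℝ) ≤ (G.degree v : ℝ)
          have := (hmemB v).mp hv
          exact_mod_cast this)
      simpa [nsmul_eq_mul] using this
    have hAsum : (Bᶜ.card : ℝ) * (t : ℝ) ≤ ∑ v ∈ Bᶜ, (G.degree v : ℝ) := by
      have := Finset.card_nsmul_le_sum Bᶜ (fun v => (G.degree v : ℝ)) ((t : ℝ))
        (fun v hv => by
          show (t : ℝ) ≤ (G.degree v : ℝ)
          exact_mod_cast hdegt v)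
      simpa [nsmul_eq_mul] using this
    have hn : (Fintype.card V : ℝ) = (B.card : ℝ) + (Bᶜ.card : ℝ) := by
      have := Finset.card_add_card_compl B
      exact_mod_cast this.symm
    -- B is nonempty
    have hBne : (1 : ℝ) ≤ (B.card : ℝ) := by
      obtain ⟨v0⟩ := ‹Nonempty V›
      have hpos : 0 < B.card := by
        rw [Finset.card_pos]
        by_cases hv0 : v0 ∈ B
        · exact ⟨v0, hv0⟩
        · have hdeg1 : 0 < (G.neighborFinset v0).card :=
            lt_of_lt_of_le (by omega : 0 < t) (hdegt v0)
          obtain ⟨w, hw⟩ := Finset.card_pos.mp hdeg1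
          have hadj : G.Adj v0 w := (SimpleGraph.mem_neighborFinset G v0 w).mp hw
          exact ⟨w, hedge v0 w hadj (Finset.mem_compl.mpr hv0)⟩
      exact_mod_cast hpos
    have key1 : (t : ℝ) * (Bᶜ.card : ℝ) + (s : ℝ) * (B.card : ℝ)
        ≤ 2 * r * ((Bᶜ.card : ℝ) + (B.card : ℝ)) := by nlinarith
    have key3 : 0 < 2 * r - (t : ℝ) := by
      rw [gt_iff_lt, div_lt_iff₀ (by norm_num : (0:ℝ) < 2)] at hrt
      linarith
    have e3 : ((s : ℝ) - 2 * r) * (B.card : ℝ) ≤ ((2 * r - t) * r) * (B.card : ℝ) := by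
      nlinarith
    have e4 : (s : ℝ) - 2 * r ≤ (2 * r - t) * r :=
      le_of_mul_le_mul_right (by nlinarith) (by linarith : (0:ℝ) < (B.card : ℝ))
    have : (s : ℝ) ≤ r * (2 * r - t + 2) := by nlinarith
    linarith
end

section
/- Let s ≥ 0 and t ≥ 2 be integers, and let H be a finite simple graph such that there is no partition of V(H) into t − 2 sets each inducing a subgraph of H of maximum degree at most s. Let G be the graph obtained from the disjoint union of s + 1 copies H_1, …, H_{s+1} of H by adding one new vertex v adjacent to every other vertex. Then there is no partition of V(G) into t − 1 sets X_1, …, X_{t−1} such that for each i with 1 ≤ i ≤ t − 1 the subgraph of G induced on X_i has maximum degree at most s. -/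
/-- Let `H` admit no partition of its vertex set into `t − 2` sets each inducing a
subgraph of maximum degree at most `s`, and let `G` be obtained from `s + 1` disjoint
copies of `H` by adding a new vertex (here `none`) adjacent to every other vertex.
Then `G` admits no partition of its vertex set into `t − 1` sets each inducing a
subgraph of maximum degree at most `s`. -/
theorem apex_no_defective_colouring (s t : ℕ) (ht : 2 ≤ t)
    (W : Type) [Fintype W] (H : SimpleGraph W)
    (hH : ¬ ∃ Y : Fin (t - 2) → Set W,
      (Pairwise fun i j => Disjoint (Y i) (Y j)) ∧
      (⋃ i, Y i) = Set.univ ∧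
      ∀ i, MaxDegWithinLE H (Y i) s)
    (G : SimpleGraph (Option (Fin (s + 1) × W)))
    (hsame : ∀ (i : Fin (s + 1)) (x y : W),
      G.Adj (some (i, x)) (some (i, y)) ↔ H.Adj x y)
    (hdiff : ∀ (i j : Fin (s + 1)) (x y : W), i ≠ j →
      ¬ G.Adj (some (i, x)) (some (j, y)))
    (hnone : ∀ p : Fin (s + 1) × W, G.Adj none (some p)) :
    ¬ ∃ X : Fin (t - 1) → Set (Option (Fin (s + 1) × W)),
      (Pairwise fun i j => Disjoint (X i) (X j)) ∧
      (⋃ i, X i) = Set.univ ∧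
      ∀ i, MaxDegWithinLE G (X i) s := by
  rintro ⟨X, hdisj, hcover, hdeg⟩
  have ht1 : t - 1 = (t - 2) + 1 := by omega
  have hmem : (none : Option (Fin (s + 1) × W)) ∈ ⋃ i, X i := by
    rw [hcover]; trivial
  obtain ⟨i0, hi0⟩ := Set.mem_iUnion.mp hmem
  have hS : ({u | u ∈ X i0 ∧ G.Adj none u}).ncard ≤ s := hdeg i0 none hi0
  -- find a copy k avoiding X i0
  have hk : ∃ k : Fin (s + 1), ∀ x : W, some (k, x) ∉ X i0 := by
    by_contra h
    push_neg at h
    choose g hg using h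
    set f : Fin (s + 1) → Option (Fin (s + 1) × W) := fun k => some (k, g k) with hf
    have hinj : Function.Injective f := by
      intro a b hab
      have := Option.some.inj hab
      exact (Prod.ext_iff.mp this).1
    have hsub : Set.range f ⊆ {u | u ∈ X i0 ∧ G.Adj none u} := by
      rintro _ ⟨k, rfl⟩
      exact ⟨hg k, hnone _⟩
    have h1 : (Set.range f).ncard = s + 1 := by
      rw [← Set.image_univ, Set.ncard_image_of_injective _ hinj, Set.ncard_univ]
      simp
    have := Set.ncard_le_ncard hsub (Set.toFinite _)
    omega
  obtain ⟨k, hk⟩ := hk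
  -- embedding Fin (t-2) → Fin (t-1) avoiding i0
  set i0' : Fin ((t - 2) + 1) := Fin.cast ht1 i0 with hi0'
  set e : Fin (t - 2) → Fin (t - 1) := fun j => Fin.cast ht1.symm (i0'.succAbove j) with he
  have he_ne : ∀ j, e j ≠ i0 := by
    intro j hj
    apply Fin.succAbove_ne i0' j
    apply Fin.ext
    simpa [he, hi0'] using congrArg Fin.val hj
  have he_inj : Function.Injective e := by
    intro a b hab
    apply Fin.succAbove_right_injective (p := i0')
    apply Fin.ext
    simpa [he] using congrArg Fin.val hab
  have he_surj : ∀ i : Fin (t - 1), i ≠ i0 → ∃ j, e j = i := by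
    intro i hi
    have hne : Fin.cast ht1 i ≠ i0' := by
      intro h
      apply hi
      apply Fin.ext
      simpa [hi0'] using congrArg Fin.val h
    obtain ⟨j, hj⟩ := Fin.exists_succAbove_eq hne
    refine ⟨j, Fin.ext ?_⟩
    simpa [he] using congrArg Fin.val hj
  apply hH
  refine ⟨fun j => {x | some (k, x) ∈ X (e j)}, ?_, ?_, ?_⟩
  · intro a b hab
    refine Set.disjoint_left.mpr fun x hx hx' => ?_
    exact Set.disjoint_left.mp (hdisj (he_inj.ne hab)) hx hx'
  · ext x
    simp only [Set.mem_iUnion, Set.mem_univ, iff_true]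
    have : some (k, x) ∈ ⋃ i, X i := by rw [hcover]; trivial
    obtain ⟨i, hi⟩ := Set.mem_iUnion.mp this
    have hine : i ≠ i0 := by
      intro h; exact hk x (h ▸ hi)
    obtain ⟨j, rfl⟩ := he_surj i hine
    exact ⟨j, hi⟩
  · intro j x hx
    have hdG : ({u | u ∈ X (e j) ∧ G.Adj (some (k, x)) u}).ncard ≤ s :=
      hdeg (e j) (some (k, x)) hx
    have hinj : Function.Injective (fun u : W => (some (k, u) : Option (Fin (s + 1) × W))) := by
      intro a b hab
      exact (Prod.ext_iff.mp (Option.some.inj hab)).2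
    have himg : (fun u : W => (some (k, u) : Option (Fin (s + 1) × W))) ''
        {u | u ∈ {x | some (k, x) ∈ X (e j)} ∧ H.Adj x u}
        ⊆ {u | u ∈ X (e j) ∧ G.Adj (some (k, x)) u} := by
      rintro _ ⟨u, ⟨hu1, hu2⟩, rfl⟩
      exact ⟨hu1, (hsame k x u).mpr hu2⟩
    calc ({u | u ∈ {x | some (k, x) ∈ X (e j)} ∧ H.Adj x u}).ncard
        = ((fun u : W => (some (k, u) : Option (Fin (s + 1) × W))) ''
            {u | u ∈ {x | some (k, x) ∈ X (e j)} ∧ H.Adj x u}).ncard :=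
          (Set.ncard_image_of_injective _ hinj).symm
      _ ≤ _ := Set.ncard_le_ncard himg (Set.toFinite _)
      _ ≤ s := hdG
end

section
/- Let t ≥ 0 be an integer and suppose that: (i) there exists an integer s₁ such that every finite simple graph with no K_{t+1} minor admits a partition of its vertex set into t sets each inducing a subgraph of maximum degree at most s₁; and (ii) for every integer Δ there exists an integer s₂ such that every finite simple graph G with no K_{t+1} minor and with maximum degree at most Δ admits a partition of V(G) into 4 sets X_1, …, X_4 such that every connected component of each induced subgraph G|X_j has at most s₂ vertices. Then there exists an integer s such that every finite simple graph G with no K_{t+1} minor admits a partition of V(G) into 4t sets Y_1, …, Y_{4t} such that every connected component of each induced subgraph G|Y_k has at most s vertices. -/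
/-- An induced subgraph of an induced subgraph is an induced subgraph. -/
noncomputable def induceInduceIso {V : Type} (G : SimpleGraph V) (X : Set V) (S : Set X) :
    (G.induce X).induce S ≃g G.induce (Subtype.val '' S) where
  toEquiv := Equiv.Set.image Subtype.val S Subtype.val_injective
  map_rel_iff' := Iff.rfl

lemma minor_of_induce {V : Type} (G : SimpleGraph V) (X : Set V) (n : ℕ)
    (h : HasCompleteMinor (G.induce X) n) : HasCompleteMinor G n := by
  obtain ⟨f, hne, hconn, hdisj, hadj⟩ := h
  refine ⟨fun i => Subtype.val '' f i, fun i => (hne i).image _, fun i => ?_,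
    fun i j hij => (Set.disjoint_image_iff Subtype.val_injective).mpr (hdisj hij),
    fun i j hij => ?_⟩
  · exact ((induceInduceIso G X (f i)).connected_iff).mp (hconn i)
  · obtain ⟨x, hx, y, hy, hxy⟩ := hadj i j hij
    exact ⟨x.1, ⟨x, hx, rfl⟩, y.1, ⟨y, hy, rfl⟩, hxy⟩

lemma supp_ncard_eq_of_iso {V W : Type} {G : SimpleGraph V} {H : SimpleGraph W}
    (φ : G ≃g H) (c : H.ConnectedComponent) :
    c.supp.ncard = (φ.connectedComponentEquiv.symm c).supp.ncard := by
  rw [← Nat.card_coe_set_eq, ← Nat.card_coe_set_eq]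
  refine Nat.card_congr (Equiv.symm ?_)
  have := SimpleGraph.ConnectedComponent.isoEquivSupp φ (φ.connectedComponentEquiv.symm c)
  rwa [Equiv.apply_symm_apply] at this

lemma pair_disjoint {V : Type} {t : ℕ} {X : Fin t → Set V}
    (X' : (i : Fin t) → Fin 4 → Set (X i))
    (Xdisj : Pairwise fun i j => Disjoint (X i) (X j))
    (hdisj' : ∀ i, Pairwise fun j j' => Disjoint (X' i j) (X' i j')) :
    ∀ p q : Fin 4 × Fin t, p ≠ q →
      Disjoint (Subtype.val '' X' p.2 p.1) (Subtype.val '' X' q.2 q.1) := by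
  rintro ⟨j, i⟩ ⟨j', i'⟩ hpq
  by_cases hii : i = i'
  · subst hii
    have hjj : j ≠ j' := fun h => hpq (by rw [h])
    exact (Set.disjoint_image_iff Subtype.val_injective).mpr (hdisj' i hjj)
  · exact Set.disjoint_of_subset Set.image_val_subset Set.image_val_subset (Xdisj hii)

/-- Suppose (i) there is `s₁` such that every finite graph with no `K_{t+1}` minor has a
partition into `t` sets each inducing a subgraph of maximum degree at most `s₁`, and
(ii) for every `Δ` there is `s₂` such that every finite graph with no `K_{t+1}` minor
and maximum degree at most `Δ` has a partition into `4` sets each inducing a subgraph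
whose components have at most `s₂` vertices. Then there is `s` such that every finite
graph with no `K_{t+1}` minor has a partition into `4t` sets each inducing a subgraph
whose components have at most `s` vertices. -/
theorem fragmentation_4t (t : ℕ)
    (h1 : ∃ s₁ : ℕ, ∀ (V : Type) [Fintype V] (G : SimpleGraph V),
      ¬ HasCompleteMinor G (t + 1) →
      ∃ X : Fin t → Set V,
        (Pairwise fun i j => Disjoint (X i) (X j)) ∧
        (⋃ i, X i) = Set.univ ∧
        ∀ i, MaxDegWithinLE G (X i) s₁)
    (h2 : ∀ Δ : ℕ, ∃ s₂ : ℕ, ∀ (V : Type) [Fintype V] (G : SimpleGraph V),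
      ¬ HasCompleteMinor G (t + 1) →
      (∀ v : V, (G.neighborSet v).ncard ≤ Δ) →
      ∃ X : Fin 4 → Set V,
        (Pairwise fun i j => Disjoint (X i) (X j)) ∧
        (⋃ i, X i) = Set.univ ∧
        ∀ j, ∀ c : (G.induce (X j)).ConnectedComponent, c.supp.ncard ≤ s₂) :
    ∃ s : ℕ, ∀ (V : Type) [Fintype V] (G : SimpleGraph V),
      ¬ HasCompleteMinor G (t + 1) →
      ∃ Y : Fin (4 * t) → Set V,
        (Pairwise fun i j => Disjoint (Y i) (Y j)) ∧
        (⋃ i, Y i) = Set.univ ∧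
        ∀ k, ∀ c : (G.induce (Y k)).ConnectedComponent, c.supp.ncard ≤ s := by
  obtain ⟨s₁, h1⟩ := h1
  obtain ⟨s₂, h2⟩ := h2 s₁
  refine ⟨s₂, fun V _ G hG => ?_⟩
  obtain ⟨X, Xdisj, Xuniv, Xdeg⟩ := h1 V G hG
  have key : ∀ i : Fin t, ∃ X' : Fin 4 → Set (X i),
      (Pairwise fun j j' => Disjoint (X' j) (X' j')) ∧
      (⋃ j, X' j) = Set.univ ∧
      ∀ j, ∀ c : ((G.induce (X i)).induce (X' j)).ConnectedComponent,
        c.supp.ncard ≤ s₂ := by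
    intro i
    haveI : Fintype (X i) := (Set.toFinite (X i)).fintype
    refine h2 (X i) (G.induce (X i)) (fun hm => hG (minor_of_induce G (X i) _ hm)) ?_
    intro v
    have h1 : ((G.induce (X i)).neighborSet v).ncard
        = (Subtype.val '' ((G.induce (X i)).neighborSet v)).ncard :=
      (Set.ncard_image_of_injective _ Subtype.val_injective).symm
    have h2 : Subtype.val '' ((G.induce (X i)).neighborSet v)
        = {u | u ∈ X i ∧ G.Adj v.1 u} := by
      ext u
      constructor
      · rintro ⟨w, hw, rfl⟩; exact ⟨w.2, hw⟩
      · rintro ⟨hu, hadj⟩; exact ⟨⟨u, hu⟩, hadj, rfl⟩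
    rw [h1, h2]
    exact Xdeg i v.1 v.2
  choose X' hdisj' huniv' hcomp' using key
  refine ⟨fun k => Subtype.val ''
      X' (finProdFinEquiv.symm k).2 (finProdFinEquiv.symm k).1, ?_, ?_, ?_⟩
  · intro k k' hkk'
    exact pair_disjoint X' Xdisj hdisj' _ _ (finProdFinEquiv.symm.injective.ne hkk')
  · apply Set.eq_univ_of_forall
    intro v
    have hv : v ∈ ⋃ i, X i := Xuniv ▸ Set.mem_univ v
    obtain ⟨_, ⟨i, rfl⟩, hvi⟩ := hv
    have : (⟨v, hvi⟩ : X i) ∈ ⋃ j, X' i j := (huniv' i) ▸ Set.mem_univ _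
    obtain ⟨_, ⟨j, rfl⟩, hj⟩ := this
    refine Set.mem_iUnion.mpr ⟨finProdFinEquiv (j, i), ?_⟩
    rw [Equiv.symm_apply_apply]
    exact ⟨⟨v, hvi⟩, hj, rfl⟩
  · intro k c
    set i := (finProdFinEquiv.symm k).2
    set j := (finProdFinEquiv.symm k).1
    rw [supp_ncard_eq_of_iso (induceInduceIso G (X i) (X' i j)) c]
    exact hcomp' i j _
end

section
/- Let s ≥ 0 and t ≥ 2 be integers, and let H_1, …, H_{s+1} be finite simple graphs, none of which has K_t as a minor. Let G be the graph obtained from the disjoint union of H_1, …, H_{s+1} by adding one new vertex v adjacent to every other vertex. Then K_{t+1} is not a minor of G. -/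
lemma const_on_connected {V I : Type} (G : SimpleGraph V) (A : Set V)
    (hc : (G.induce A).Preconnected) (c : V → I)
    (h : ∀ u ∈ A, ∀ v ∈ A, G.Adj u v → c u = c v) :
    ∀ u ∈ A, ∀ v ∈ A, c u = c v := by
  suffices H : ∀ u v : A, c u = c v by
    intro u hu v hv; exact H ⟨u, hu⟩ ⟨v, hv⟩
  intro u v
  obtain ⟨w⟩ := hc u v
  induction w with
  | nil => rfl
  | cons hab p ih =>
    rename_i a b c'
    exact (h a a.2 b b.2 hab).trans ih



/-- If none of the graphs `H 0, …, H s` has a `K_t` minor (`t ≥ 2`), and `G` is obtained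
from their disjoint union by adding a new vertex (here `none`) adjacent to every other
vertex, then `G` has no `K_{t+1}` minor. -/
theorem apex_of_disjoint_union_no_minor (s t : ℕ) (ht : 2 ≤ t)
    (W : Fin (s + 1) → Type) [∀ i, Fintype (W i)]
    (H : ∀ i, SimpleGraph (W i)) (hH : ∀ i, ¬ HasCompleteMinor (H i) t)
    (G : SimpleGraph (Option (Σ i, W i)))
    (hsame : ∀ (i : Fin (s + 1)) (x y : W i),
      G.Adj (some ⟨i, x⟩) (some ⟨i, y⟩) ↔ (H i).Adj x y)
    (hdiff : ∀ (i j : Fin (s + 1)) (x : W i) (y : W j), i ≠ j →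
      ¬ G.Adj (some ⟨i, x⟩) (some ⟨j, y⟩))
    (hnone : ∀ p : Σ i, W i, G.Adj none (some p)) :
    ¬ HasCompleteMinor G (t + 1) := by
  rintro ⟨f, hne, hconn, hdisj, hadj⟩
  classical
  let idx : Option (Σ i, W i) → Fin (s + 1) := fun v => v.elim 0 Sigma.fst
  obtain ⟨j₀, hj₀⟩ : ∃ j₀ : Fin (t + 1), ∀ k, k ≠ j₀ → none ∉ f k := by
    by_cases h : ∃ j, none ∈ f j
    · obtain ⟨j, hj⟩ := h
      exact ⟨j, fun k hk hnk => Set.disjoint_left.mp (hdisj hk) hnk hj⟩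
    · push_neg at h
      exact ⟨0, fun k _ => h k⟩
  set g : Fin t → Set (Option (Σ i, W i)) := fun k => f (j₀.succAbove k) with hgdef
  have gnone : ∀ k, none ∉ g k := fun k => hj₀ _ (Fin.succAbove_ne j₀ k)
  have gsome : ∀ k, ∀ v ∈ g k, ∃ p : Σ i, W i, v = some p := by
    intro k v hv
    cases v with
    | none => exact absurd hv (gnone k)
    | some p => exact ⟨p, rfl⟩
  -- idx is constant within each branch set
  have hidx : ∀ k, ∀ u ∈ g k, ∀ v ∈ g k, idx u = idx v := by
    intro k
    refine const_on_connected G (g k) (hconn (j₀.succAbove k)).preconnected idx ?_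
    intro u hu v hv huv
    obtain ⟨⟨i, x⟩, rfl⟩ := gsome k u hu
    obtain ⟨⟨j, y⟩, rfl⟩ := gsome k v hv
    by_contra hij
    exact hdiff i j x y hij huv
  -- across branch sets, idx agrees too (edges between sets)
  have hadj' : ∀ k k' : Fin t, k ≠ k' →
      ∃ x ∈ g k, ∃ y ∈ g k', G.Adj x y := by
    intro k k' hkk'
    exact hadj _ _ (fun h => hkk' (Fin.succAbove_right_injective h))
  have k₀ : Fin t := ⟨0, by omega⟩
  obtain ⟨v₀, hv₀⟩ := hne (j₀.succAbove k₀)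
  obtain ⟨i₀, hi₀⟩ : ∃ i₀ : Fin (s + 1), ∀ k, ∀ v ∈ g k, idx v = i₀ := by
    refine ⟨idx v₀, ?_⟩
    intro k v hv
    by_cases hk : k = k₀
    · exact hidx k v hv v₀ (by rw [hk]; exact hv₀)
    · obtain ⟨x, hx, y, hy, hxy⟩ := hadj' k k₀ hk
      have h1 : idx v = idx x := hidx k v hv x hx
      have h2 : idx y = idx v₀ := hidx k₀ y hy v₀ hv₀
      have h3 : idx x = idx y := by
        obtain ⟨⟨i, a⟩, rfl⟩ := gsome k x hx
        obtain ⟨⟨j, b⟩, rfl⟩ := gsome k₀ y hy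
        by_contra hij
        exact hdiff i j a b hij hxy
      rw [h1, h3, h2]
  -- every element of every branch set is some ⟨i₀, x⟩
  have key : ∀ k, ∀ v ∈ g k, ∃ x : W i₀, v = some ⟨i₀, x⟩ := by
    intro k v hv
    obtain ⟨⟨i, x⟩, rfl⟩ := gsome k v hv
    have : i = i₀ := hi₀ k _ hv
    subst this
    exact ⟨x, rfl⟩
  -- branch sets in W i₀
  set F : Fin t → Set (W i₀) := fun k => {x | some ⟨i₀, x⟩ ∈ g k} with hFdef
  apply hH i₀
  refine ⟨F, ?_, ?_, ?_, ?_⟩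
  · intro k
    obtain ⟨v, hv⟩ := hne (j₀.succAbove k)
    obtain ⟨x, rfl⟩ := key k v hv
    exact ⟨x, hv⟩
  · intro k
    -- build surjective graph hom from G.induce (g k) to (H i₀).induce (F k)
    have keyk : ∀ u : g k, ∃ x : W i₀, (u : Option (Σ i, W i)) = some ⟨i₀, x⟩ :=
      fun u => key k u u.2
    let π : g k → F k := fun u =>
      ⟨(keyk u).choose, by
        have := (keyk u).choose_spec
        have hu := u.2
        rw [this] at hu
        exact hu⟩
    have hπ : ∀ u : g k, (u : Option (Σ i, W i)) = some ⟨i₀, (π u : W i₀)⟩ :=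
      fun u => (keyk u).choose_spec
    have hmap : ∀ {u v : g k}, (G.induce (g k)).Adj u v →
        ((H i₀).induce (F k)).Adj (π u) (π v) := by
      intro u v huv
      have h1 : G.Adj u.1 v.1 := huv
      rw [hπ u, hπ v] at h1
      exact (hsame i₀ _ _).mp h1
    have hsurj : Function.Surjective π := by
      rintro ⟨x, hx⟩
      refine ⟨⟨some ⟨i₀, x⟩, hx⟩, ?_⟩
      have h : x = ((π ⟨some ⟨i₀, x⟩, hx⟩ : F k) : W i₀) := by
        have h := hπ ⟨some ⟨i₀, x⟩, hx⟩
        simpa using h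
      exact Subtype.ext h.symm
    exact SimpleGraph.Connected.map ⟨π, hmap⟩ hsurj (hconn (j₀.succAbove k))
  · intro k k' hkk'
    have hd : Disjoint (g k) (g k') :=
      hdisj (fun h => hkk' (Fin.succAbove_right_injective h))
    rw [Set.disjoint_left]
    intro x hx hx'
    exact Set.disjoint_left.mp hd hx hx'
  · intro k k' hkk'
    obtain ⟨x, hx, y, hy, hxy⟩ := hadj' k k' hkk'
    obtain ⟨a, rfl⟩ := key k x hx
    obtain ⟨b, rfl⟩ := key k' y hy
    exact ⟨a, hx, b, hy, (hsame i₀ a b).mp hxy⟩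
end
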